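/- arXiv:1412.0409 — 5 statements merged into one kernel-verified Lean document; each statement's English description precedes it below -/
import Mathlib

section
/- Let ρ > 0, R = e^{2ρ}, and let B = {z ∈ ℂ : |z − ((R+1)/2) i| < (R−1)/2} be the hyperbolic ball of radius ρ centered at e^{ρ} i. For any real numbers a, b with 0 ≤ a ≤ b ≤ 2ρ, the hyperbolic area of the set {z ∈ B : a < log(Im z) < b} equals 2 ∫_a^b √( R(e^{−t} − e^{−2t}) + e^{−t} − 1 ) dt. -/
open Complex Metric Set MeasureTheory

/-- The hyperbolic area measure on the upper half-plane: density `(Im z)⁻²`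
against two-dimensional Lebesgue measure on `ℂ`. -/
noncomputable def hypArea : Measure ℂ :=
  volume.withDensity (fun z => ENNReal.ofReal (1 / z.im ^ 2))

lemma sq_lt_set (c : ℝ) : {x : ℝ | x ^ 2 < c} = Ioo (-Real.sqrt c) (Real.sqrt c) := by
  ext x
  simp only [mem_setOf_eq, mem_Ioo, ← abs_lt, ← Real.sqrt_sq_eq_abs]
  exact (Real.sqrt_lt_sqrt_iff (sq_nonneg x)).symm

lemma exp_algebra (R t : ℝ) :
    Real.exp t • (1 / Real.exp t ^ 2 *
        (2 * Real.sqrt ((R - Real.exp t) * (Real.exp t - 1)))) =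
      2 * Real.sqrt (R * (Real.exp (-t) - Real.exp (-2 * t)) + Real.exp (-t) - 1) := by
  have hE : (0:ℝ) < Real.exp t := Real.exp_pos t
  have h1 : Real.exp (-t) = (Real.exp t)⁻¹ := Real.exp_neg t
  have h2 : Real.exp (-2 * t) = ((Real.exp t)⁻¹) ^ 2 := by
    rw [← Real.exp_neg, sq, ← Real.exp_add]; ring_nf
  have harg : R * (Real.exp (-t) - Real.exp (-2 * t)) + Real.exp (-t) - 1 =
      (Real.exp (-t)) ^ 2 * ((R - Real.exp t) * (Real.exp t - 1)) := by
    rw [h1, h2]; field_simp; ring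
  rw [harg, Real.sqrt_mul (sq_nonneg _), Real.sqrt_sq (Real.exp_pos (-t)).le, smul_eq_mul, h1]
  field_simp

theorem area_of_horizontal_slice_of_ball (ρ R : ℝ) (hρ : 0 < ρ) (hR : R = Real.exp (2 * ρ))
    (a b : ℝ) (ha : 0 ≤ a) (hab : a ≤ b) (hb : b ≤ 2 * ρ) :
    hypArea {z : ℂ | ‖z - ((R + 1) / 2) * Complex.I‖ < (R - 1) / 2 ∧
        a < Real.log z.im ∧ Real.log z.im < b} =
      ENNReal.ofReal
        (2 * ∫ t in a..b,
          Real.sqrt (R * (Real.exp (-t) - Real.exp (-2 * t)) + Real.exp (-t) - 1)) := by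
  have hR1 : 1 < R := by
    rw [hR]; nlinarith [Real.add_one_le_exp (2 * ρ)]
  set ea := Real.exp a with hea
  set eb := Real.exp b with heb
  have heab : ea ≤ eb := Real.exp_le_exp.mpr hab
  have hea1 : 1 ≤ ea := by rw [hea, ← Real.exp_zero]; exact Real.exp_le_exp.mpr ha
  have hea0 : 0 < ea := Real.exp_pos a
  -- rewrite the set
  have hset : {z : ℂ | ‖z - ((R + 1) / 2) * Complex.I‖ < (R - 1) / 2 ∧
        a < Real.log z.im ∧ Real.log z.im < b} =
      {z : ℂ | z.re ^ 2 < (R - z.im) * (z.im - 1) ∧ z.im ∈ Ioo ea eb} := by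
    have habs : ∀ z : ℂ, ‖z - ((R + 1) / 2) * Complex.I‖ < (R - 1) / 2 ↔
        z.re ^ 2 < (R - z.im) * (z.im - 1) := by
      intro z
      rw [Complex.norm_def, Complex.normSq_apply, Real.sqrt_lt' (by linarith)]
      have hre : (z - ((R + 1) / 2 : ℝ) * Complex.I).re = z.re := by simp
      have him : (z - ((R + 1) / 2 : ℝ) * Complex.I).im = z.im - (R + 1) / 2 := by simp
      push_cast at hre him ⊢
      rw [hre, him]
      constructor <;> intro h <;> nlinarith [sq_nonneg z.re, sq_nonneg (z.im - (R+1)/2)]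
    ext z
    simp only [mem_setOf_eq, habs, mem_Ioo]
    constructor
    · rintro ⟨h1, h2, h3⟩
      have hz1 : 1 < z.im := by nlinarith [sq_nonneg z.re]
      have hz0 : 0 < z.im := by linarith
      exact ⟨h1, (Real.lt_log_iff_exp_lt hz0).mp h2, (Real.log_lt_iff_lt_exp hz0).mp h3⟩
    · rintro ⟨h1, h2, h3⟩
      have hz0 : 0 < z.im := lt_of_lt_of_le hea0 h2.le
      exact ⟨h1, (Real.lt_log_iff_exp_lt hz0).mpr h2, (Real.log_lt_iff_lt_exp hz0).mpr h3⟩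
  rw [hset]
  -- measurability
  have hms : MeasurableSet {z : ℂ | z.re ^ 2 < (R - z.im) * (z.im - 1) ∧ z.im ∈ Ioo ea eb} := by
    exact MeasurableSet.inter
      (measurableSet_lt (Complex.measurable_re.pow_const 2)
        ((measurable_const.sub Complex.measurable_im).mul
          (Complex.measurable_im.sub measurable_const)))
      ((Complex.measurable_im) measurableSet_Ioo)
  rw [hypArea, withDensity_apply _ hms]
  -- move to ℝ × ℝ
  set e := Complex.measurableEquivRealProd with he
  have hsymm : ∀ p : ℝ × ℝ, (e.symm p).re = p.1 ∧ (e.symm p).im = p.2 := by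
    intro p
    have : e (e.symm p) = p := e.apply_symm_apply p
    rw [Complex.measurableEquivRealProd_apply] at this
    exact ⟨congrArg Prod.fst this, congrArg Prod.snd this⟩
  set T : Set (ℝ × ℝ) := {p : ℝ × ℝ | p.1 ^ 2 < (R - p.2) * (p.2 - 1) ∧ p.2 ∈ Ioo ea eb}
    with hT
  have hTms : MeasurableSet T :=
    MeasurableSet.inter
      (measurableSet_lt (measurable_fst.pow_const 2)
        ((measurable_const.sub measurable_snd).mul (measurable_snd.sub measurable_const)))
      (measurable_snd measurableSet_Ioo)
  have hpre : e.symm ⁻¹' {z : ℂ | z.re ^ 2 < (R - z.im) * (z.im - 1) ∧ z.im ∈ Ioo ea eb} = T := by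
    ext p
    simp only [mem_preimage, mem_setOf_eq, (hsymm p).1, (hsymm p).2, hT]
  have hstep1 : ∫⁻ z in {z : ℂ | z.re ^ 2 < (R - z.im) * (z.im - 1) ∧ z.im ∈ Ioo ea eb},
      ENNReal.ofReal (1 / z.im ^ 2) ∂volume
      = ∫⁻ p in T, ENNReal.ofReal (1 / p.2 ^ 2) ∂volume := by
    rw [← hpre, ← MeasurePreserving.setLIntegral_comp_preimage_emb
      (Complex.volume_preserving_equiv_real_prod.symm _) e.symm.measurableEmbedding
      (fun z => ENNReal.ofReal (1 / z.im ^ 2))]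
    exact lintegral_congr fun p => by rw [(hsymm p).2]
  rw [hstep1]
  -- Fubini
  have hfmeas : Measurable fun p : ℝ × ℝ => T.indicator (fun q => ENNReal.ofReal (1 / q.2 ^ 2)) p :=
    (Measurable.indicator (by fun_prop) hTms)
  rw [← lintegral_indicator hTms _, Measure.volume_eq_prod ℝ ℝ, lintegral_prod_symm' _ hfmeas]
  -- inner integral over x
  have hinner : ∀ y : ℝ, ∫⁻ x, T.indicator (fun q => ENNReal.ofReal (1 / q.2 ^ 2)) (x, y) ∂volume
      = (Ioo ea eb).indicator
          (fun y => ENNReal.ofReal (1 / y ^ 2 * (2 * Real.sqrt ((R - y) * (y - 1))))) y := by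
    intro y
    by_cases hy : y ∈ Ioo ea eb
    · have hxset : ∀ x : ℝ, (x, y) ∈ T ↔ x ∈ Ioo (-Real.sqrt ((R - y) * (y - 1)))
          (Real.sqrt ((R - y) * (y - 1))) := by
        intro x
        rw [← sq_lt_set]
        simp only [hT, mem_setOf_eq, mem_Ioo]
        exact and_iff_left (mem_Ioo.mp hy)
      have : (fun x => T.indicator (fun q => ENNReal.ofReal (1 / q.2 ^ 2)) (x, y))
          = (Ioo (-Real.sqrt ((R - y) * (y - 1))) (Real.sqrt ((R - y) * (y - 1)))).indicator
              (fun _ => ENNReal.ofReal (1 / y ^ 2)) := by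
        ext x
        by_cases hx : (x, y) ∈ T
        · rw [indicator_of_mem hx, indicator_of_mem ((hxset x).mp hx)]
        · rw [indicator_of_notMem hx, indicator_of_notMem (fun h => hx ((hxset x).mpr h))]
      rw [this, lintegral_indicator measurableSet_Ioo _, setLIntegral_const, Real.volume_Ioo,
        indicator_of_mem hy, ← ENNReal.ofReal_mul (by positivity)]
      congr 1
      have hsnn : 0 ≤ Real.sqrt ((R - y) * (y - 1)) := Real.sqrt_nonneg _
      ring_nf
    · have : (fun x => T.indicator (fun q => ENNReal.ofReal (1 / q.2 ^ 2)) (x, y))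
          = fun _ => 0 := by
        ext x
        apply indicator_of_notMem
        intro hmem
        exact hy hmem.2
      rw [this, lintegral_const, zero_mul, indicator_of_notMem hy]
  simp only [hinner]
  rw [lintegral_indicator measurableSet_Ioo _]
  -- from lintegral to integral
  set h : ℝ → ℝ := fun y => 1 / y ^ 2 * (2 * Real.sqrt ((R - y) * (y - 1))) with hh
  have hcont : ContinuousOn h {y : ℝ | y ≠ 0} := by
    apply ContinuousOn.mul
    · exact ContinuousOn.div continuousOn_const (continuousOn_pow 2) (by
        intro y hy; exact pow_ne_zero _ hy)
    · exact (continuous_const.mul (Real.continuous_sqrt.comp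
        (by continuity))).continuousOn
  have hint : IntegrableOn h (Ioo ea eb) volume := by
    apply IntegrableOn.mono_set _ Ioo_subset_Icc_self
    apply ContinuousOn.integrableOn_Icc
    apply hcont.mono
    intro y hy
    exact ne_of_gt (lt_of_lt_of_le hea0 hy.1)
  have hnn : 0 ≤ᵐ[volume.restrict (Ioo ea eb)] h := by
    filter_upwards with y
    have : 0 ≤ Real.sqrt ((R - y) * (y - 1)) := Real.sqrt_nonneg _
    positivity
  rw [← MeasureTheory.ofReal_integral_eq_lintegral_ofReal hint hnn]
  congr 1
  -- change of variables
  have hsub : ∫ y in ea..eb, h y = ∫ t in a..b, Real.exp t • h (Real.exp t) := by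
    rw [hea, heb]
    refine (intervalIntegral.integral_comp_smul_deriv' (f := Real.exp) (f' := Real.exp)
      (fun x _ => Real.hasDerivAt_exp x) Real.continuous_exp.continuousOn ?_).symm
    apply hcont.mono
    rintro y ⟨t, _, rfl⟩
    simp only [mem_setOf_eq]
    exact (Real.exp_pos t).ne'
  rw [show (∫ y in Ioo ea eb, h y) = ∫ y in ea..eb, h y from by
        rw [intervalIntegral.integral_of_le heab, integral_Ioc_eq_integral_Ioo],
      hsub, ← intervalIntegral.integral_const_mul]
  exact intervalIntegral.integral_congr fun t _ => exp_algebra R t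
end

section
/- For ρ > 0 let B_ρ denote the hyperbolic ball of radius ρ centered at e^{ρ} i in the upper half-plane, and let A(ρ) be its hyperbolic area. Then for every bounded continuous function g : ℝ → ℝ, (1/A(ρ)) ∫_{B_ρ} g(log(Im z)) (Im z)^{-2} dLeb(z) converges, as ρ → ∞, to (2/π) ∫_0^∞ g(t) √(e^{−t} − e^{−2t}) dt. -/
open Complex Metric Set MeasureTheory Filter

/-- The hyperbolic ball of radius `ρ` centered at `e^ρ i` in the upper half-plane,
with the hyperbolic distance `dist z w = 2 arsinh(|z-w| / (2 √(Im z · Im w)))`. -/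
noncomputable def hypBall (ρ : ℝ) : Set ℂ :=
  {z : ℂ | 0 < z.im ∧
    2 * Real.arsinh (‖z - Real.exp ρ * Complex.I‖ /
      (2 * Real.sqrt (z.im * Real.exp ρ))) < ρ}

lemma hypBall_eq {ρ : ℝ} (hρ : 0 < ρ) :
    hypBall ρ = {z : ℂ | z.re ^ 2 < (Real.exp (2*ρ) - z.im) * (z.im - 1)} := by
  have hc : (0:ℝ) < Real.exp ρ := Real.exp_pos _
  have hb : Real.exp (2*ρ) = Real.exp ρ ^ 2 := by
    rw [two_mul, Real.exp_add, sq]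
  have hb1 : (1:ℝ) < Real.exp (2*ρ) := by
    rw [show (1:ℝ) = Real.exp 0 by simp]
    exact Real.exp_lt_exp.2 (by linarith)
  ext z
  set x := z.re with hx
  set y := z.im with hy
  set c := Real.exp ρ with hcdef
  have habs : (‖z - c * Complex.I‖)^2 = x^2 + (y - c)^2 := by
    rw [Complex.sq_norm, Complex.normSq_apply]
    simp [hx, hy]
    ring
  have key : ∀ _ : 0 < y, (2 * Real.arsinh (‖z - c * Complex.I‖ /
      (2 * Real.sqrt (y * c))) < ρ ↔ x^2 < (Real.exp (2*ρ) - y) * (y - 1)) := by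
    intro hy0
    have hyc : (0:ℝ) < y * c := mul_pos hy0 hc
    have hsq : (0:ℝ) < Real.sqrt (y * c) := Real.sqrt_pos.2 hyc
    have hs : (0:ℝ) < Real.sinh (ρ/2) := Real.sinh_pos_iff.2 (by linarith)
    have h1 : 2 * Real.arsinh (‖z - c * Complex.I‖ / (2 * Real.sqrt (y * c))) < ρ
        ↔ ‖z - c * Complex.I‖ / (2 * Real.sqrt (y * c)) < Real.sinh (ρ/2) := by
      rw [show (2 : ℝ) * Real.arsinh (‖z - c * Complex.I‖ /
        (2 * Real.sqrt (y * c))) < ρ ↔ Real.arsinh (‖z - c * Complex.I‖ /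
        (2 * Real.sqrt (y * c))) < ρ/2 by constructor <;> intro h <;> linarith]
      rw [← Real.arsinh_sinh (ρ/2), Real.arsinh_lt_arsinh, Real.arsinh_sinh]
    rw [h1, div_lt_iff₀ (by positivity),
      ← pow_lt_pow_iff_left₀ (norm_nonneg _) (by positivity) two_ne_zero, habs]
    have hcinv : c * c⁻¹ = 1 := mul_inv_cancel₀ hc.ne'
    have h4 : Real.cosh ρ = (c + c⁻¹)/2 := by rw [Real.cosh_eq, Real.exp_neg]
    have h5 : Real.sinh (ρ/2)^2 = (Real.cosh ρ - 1)/2 := by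
      have h6 := Real.cosh_two_mul (ρ/2)
      have h7 := Real.cosh_sq (ρ/2)
      have : (2:ℝ) * (ρ/2) = ρ := by ring
      rw [this] at h6
      linarith
    have h3 : (Real.sinh (ρ/2) * (2 * Real.sqrt (y*c)))^2 = y * (c^2 - 2*c + 1) := by
      have hsq2 : Real.sqrt (y*c) ^ 2 = y * c := Real.sq_sqrt hyc.le
      have expand : (Real.sinh (ρ/2) * (2 * Real.sqrt (y*c)))^2
          = Real.sinh (ρ/2)^2 * 4 * (y * c) := by rw [mul_pow, mul_pow, hsq2]; ring
      rw [expand, h5, h4]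
      linear_combination y * hcinv
    rw [h3, hb]
    constructor <;> intro h <;> nlinarith [sq_nonneg x]
  constructor
  · rintro ⟨hy0, h⟩
    exact (key hy0).1 h
  · intro h
    have hy0 : 1 < y := by
      by_contra hcon
      push_neg at hcon
      have hple : (Real.exp (2*ρ) - y) * (y-1) ≤ 0 :=
        mul_nonpos_of_nonneg_of_nonpos (by linarith) (by linarith)
      have := sq_nonneg x
      simp only [mem_setOf_eq] at h
      linarith
    exact ⟨by linarith, (key (by linarith)).2 h⟩

lemma disk_integral {ρ : ℝ} (hρ : 0 < ρ) (h : ℝ → ℝ) (hm : Measurable h) (C : ℝ)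
    (hC : ∀ y, |h y| ≤ C) :
    ∫ z in hypBall ρ, h z.im / z.im ^ 2 ∂volume
      = ∫ y in Ioi (1:ℝ),
          2 * Real.sqrt ((Real.exp (2*ρ) - y) * (y - 1)) * (h y / y ^ 2) := by
  set b := Real.exp (2*ρ) with hbdef
  have hb1 : (1:ℝ) < b := by
    rw [hbdef, show (1:ℝ) = Real.exp 0 by simp]
    exact Real.exp_lt_exp.2 (by linarith)
  set S : Set (ℝ × ℝ) := {p | p.1 ^ 2 < (b - p.2) * (p.2 - 1)} with hSdef
  have hSopen : IsOpen S := by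
    apply isOpen_lt (by fun_prop) (by fun_prop)
  have hSm : MeasurableSet S := hSopen.measurableSet
  have hmemS : ∀ p : ℝ × ℝ, p ∈ S → 1 < p.2 ∧ p.2 < b := by
    rintro ⟨x, y⟩ hp
    simp only [hSdef, mem_setOf_eq] at hp
    constructor
    · by_contra hcon
      push_neg at hcon
      have : (b - y) * (y - 1) ≤ 0 :=
        mul_nonpos_of_nonneg_of_nonpos (by linarith) (by linarith)
      linarith [sq_nonneg x]
    · by_contra hcon
      push_neg at hcon
      have h1y : 1 < y := by
        by_contra hc2
        push_neg at hc2
        have : (b - y) * (y - 1) ≤ 0 :=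
          mul_nonpos_of_nonneg_of_nonpos (by linarith) (by linarith)
        linarith [sq_nonneg x]
      have : (b - y) * (y - 1) ≤ 0 :=
        mul_nonpos_of_nonpos_of_nonneg (by linarith) (by linarith)
      linarith [sq_nonneg x]
  have hSsub : S ⊆ Ioo (-b) b ×ˢ Ioo 1 b := by
    rintro ⟨x, y⟩ hp
    obtain ⟨h1, h2⟩ := hmemS _ hp
    simp only [hSdef, mem_setOf_eq] at hp
    refine ⟨⟨?_, ?_⟩, h1, h2⟩ <;> nlinarith
  have hfin : volume S < ⊤ := by
    refine (measure_mono hSsub).trans_lt ?_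
    rw [Measure.volume_eq_prod, Measure.prod_prod, Real.volume_Ioo, Real.volume_Ioo]
    exact ENNReal.mul_lt_top ENNReal.ofReal_lt_top ENNReal.ofReal_lt_top
  have hmf : Measurable (fun p : ℝ × ℝ => h p.2 / p.2 ^ 2) := by fun_prop
  have hInt : IntegrableOn (fun p : ℝ × ℝ => h p.2 / p.2 ^ 2) S volume := by
    refine Measure.integrableOn_of_bounded hfin.ne hmf.aestronglyMeasurable
      (M := C) ?_
    refine (ae_restrict_iff' hSm).2 (ae_of_all _ fun p hp => ?_)
    obtain ⟨h1, _⟩ := hmemS _ hp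
    have hy2 : (1:ℝ) ≤ p.2 ^ 2 := by nlinarith
    rw [Real.norm_eq_abs, abs_div, _root_.abs_of_nonneg (by positivity : (0:ℝ) ≤ p.2 ^ 2)]
    calc |h p.2| / p.2 ^ 2 ≤ |h p.2| := div_le_self (abs_nonneg _) hy2
      _ ≤ C := hC _
  have hIndInt : Integrable (S.indicator fun p : ℝ × ℝ => h p.2 / p.2 ^ 2) volume :=
    hInt.integrable_indicator hSm
  -- step 1 : move from ℂ to ℝ × ℝ
  have step1 : ∫ z in hypBall ρ, h z.im / z.im ^ 2 ∂volume
      = ∫ p in S, h p.2 / p.2 ^ 2 ∂(volume : Measure (ℝ × ℝ)) := by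
    rw [show hypBall ρ = Complex.measurableEquivRealProd ⁻¹' S by
      rw [hypBall_eq hρ]; rfl]
    have := Complex.volume_preserving_equiv_real_prod.setIntegral_preimage_emb
      Complex.measurableEquivRealProd.measurableEmbedding (fun p : ℝ × ℝ => h p.2 / p.2 ^ 2) S
    exact this
  -- step 2 : Fubini
  have step2 : ∫ p in S, h p.2 / p.2 ^ 2 ∂(volume : Measure (ℝ × ℝ))
      = ∫ y : ℝ, ∫ x : ℝ, S.indicator (fun p : ℝ × ℝ => h p.2 / p.2 ^ 2) (x, y) := by
    rw [← integral_indicator hSm]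
    rw [Measure.volume_eq_prod] at hIndInt ⊢
    rw [integral_prod _ hIndInt]
    exact integral_integral_swap (by exact hIndInt)
  -- step 3 : inner integral
  have step3 : ∀ y : ℝ, (∫ x : ℝ, S.indicator (fun p : ℝ × ℝ => h p.2 / p.2 ^ 2) (x, y))
      = 2 * Real.sqrt ((b - y) * (y - 1)) * (h y / y ^ 2) := by
    intro y
    set w := Real.sqrt ((b - y) * (y - 1)) with hwdef
    have hwnn : 0 ≤ w := Real.sqrt_nonneg _
    have hiff : ∀ x : ℝ, (x, y) ∈ S ↔ x ∈ Ioo (-w) w := by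
      intro x
      simp only [hSdef, mem_setOf_eq, mem_Ioo]
      rw [← abs_lt, hwdef, ← _root_.sq_abs x, Real.lt_sqrt (abs_nonneg x)]
    have : (fun x : ℝ => S.indicator (fun p : ℝ × ℝ => h p.2 / p.2 ^ 2) (x, y))
        = (Ioo (-w) w).indicator (fun _ => h y / y ^ 2) := by
      ext x
      by_cases hx : (x, y) ∈ S
      · rw [indicator_of_mem hx, indicator_of_mem ((hiff x).1 hx)]
      · rw [indicator_of_notMem hx, indicator_of_notMem (fun hc => hx ((hiff x).2 hc))]
    rw [this, integral_indicator_const _ measurableSet_Ioo, Real.volume_real_Ioo_of_le (by linarith), smul_eq_mul]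
    ring
  rw [step1, step2]
  have step4 : ∫ y : ℝ, ∫ x : ℝ, S.indicator (fun p : ℝ × ℝ => h p.2 / p.2 ^ 2) (x, y)
      = ∫ y : ℝ, 2 * Real.sqrt ((b - y) * (y - 1)) * (h y / y ^ 2) := by
    congr 1; ext y; exact step3 y
  rw [step4]
  refine (setIntegral_eq_integral_of_forall_compl_eq_zero fun y hy => ?_).symm
  simp only [mem_Ioi, not_lt] at hy
  have : Real.sqrt ((b - y) * (y - 1)) = 0 :=
    Real.sqrt_eq_zero'.2 (mul_nonpos_of_nonneg_of_nonpos (by linarith) (by linarith))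
  rw [this]
  ring

lemma hypArea_toReal {ρ : ℝ} (hρ : 0 < ρ) :
    (hypArea (hypBall ρ)).toReal = ∫ z in hypBall ρ, (1:ℝ) / z.im ^ 2 ∂volume := by
  have hmeas : MeasurableSet (hypBall ρ) := by
    rw [hypBall_eq hρ]
    exact (isOpen_lt (by fun_prop) (by fun_prop)).measurableSet
  have hm : Measurable (fun z : ℂ => (1:ℝ) / z.im ^ 2) := by fun_prop
  rw [hypArea, withDensity_apply _ hmeas,
    integral_eq_lintegral_of_nonneg_ae (ae_of_all _ fun z => by positivity)
      hm.aestronglyMeasurable]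

section oned

noncomputable def Fad (y : ℝ) : ℝ := Real.arctan (Real.sqrt (y - 1)) - Real.sqrt (y - 1) / y

lemma Fad_deriv {y : ℝ} (hy : 1 < y) :
    HasDerivAt Fad (Real.sqrt (y - 1) / y ^ 2) y := by
  have hu : (0:ℝ) < y - 1 := by linarith
  have hy0 : y ≠ 0 := by linarith
  have hsnn : (0:ℝ) < Real.sqrt (y - 1) := Real.sqrt_pos.2 hu
  have hsq : Real.sqrt (y - 1) ^ 2 = y - 1 := Real.sq_sqrt hu.le
  have hs : HasDerivAt (fun t : ℝ => Real.sqrt (t - 1)) (1 / (2 * Real.sqrt (y - 1))) y := by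
    have := (Real.hasDerivAt_sqrt (x := y - 1) hu.ne').comp y ((hasDerivAt_id y).sub_const 1)
    exact this.congr_deriv (by simp)
  have h1 : HasDerivAt (fun t : ℝ => Real.arctan (Real.sqrt (t - 1)))
      ((1 / (1 + Real.sqrt (y - 1) ^ 2)) * (1 / (2 * Real.sqrt (y - 1)))) y :=
    hs.arctan
  have h2 : HasDerivAt (fun t : ℝ => Real.sqrt (t - 1) / t)
      ((1 / (2 * Real.sqrt (y - 1)) * y - Real.sqrt (y - 1) * 1) / y ^ 2) y :=
    hs.div (hasDerivAt_id y) hy0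
  have := h1.sub h2
  refine this.congr_deriv ?_
  rw [hsq]
  field_simp
  ring_nf

lemma Fad_tendsto : Tendsto Fad atTop (nhds (Real.pi / 2)) := by
  have sqrt_tendsto : Tendsto Real.sqrt atTop atTop := by
    refine tendsto_atTop.2 fun M => ?_
    filter_upwards [eventually_ge_atTop (M ^ 2)] with y hy
    calc M ≤ |M| := le_abs_self M
      _ = Real.sqrt (M ^ 2) := (Real.sqrt_sq_eq_abs M).symm
      _ ≤ Real.sqrt y := Real.sqrt_le_sqrt hy
  have t1 : Tendsto (fun y : ℝ => Real.arctan (Real.sqrt (y - 1))) atTop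
      (nhds (Real.pi / 2)) := by
    refine (Real.tendsto_arctan_atTop.mono_right nhdsWithin_le_nhds).comp ?_
    exact sqrt_tendsto.comp (tendsto_atTop_add_const_right _ (-1) tendsto_id |>.congr
      (fun y => by simp [sub_eq_add_neg]))
  have t2 : Tendsto (fun y : ℝ => Real.sqrt (y - 1) / y) atTop (nhds 0) := by
    have l1 : Tendsto (fun y : ℝ => (y - 1) / y ^ 2) atTop (nhds 0) := by
      have i1 : Tendsto (fun y : ℝ => y⁻¹) atTop (nhds 0) := tendsto_inv_atTop_zero
      have : Tendsto (fun y : ℝ => y⁻¹ - y⁻¹ * y⁻¹) atTop (nhds (0 - 0 * 0)) :=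
        i1.sub (i1.mul i1)
      simp only [mul_zero, sub_zero] at this
      refine this.congr' ?_
      filter_upwards [eventually_gt_atTop 0] with y hy
      have h0 : y ≠ 0 := hy.ne'
      field_simp
    have := (Real.continuous_sqrt.tendsto 0).comp l1
    rw [Real.sqrt_zero] at this
    refine this.congr' ?_
    filter_upwards [eventually_ge_atTop 1] with y hy
    have hy0 : (0:ℝ) < y := by linarith
    simp only [Function.comp_apply]
    rw [Real.sqrt_div (by linarith : (0:ℝ) ≤ y - 1), Real.sqrt_sq hy0.le]
  have := t1.sub t2
  rw [sub_zero] at this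
  exact this

lemma Fad_cont : ContinuousWithinAt Fad (Ici 1) 1 := by
  apply ContinuousAt.continuousWithinAt
  apply ContinuousAt.sub
  · exact (Real.continuous_arctan.continuousAt).comp
      ((Real.continuous_sqrt.continuousAt).comp ((continuous_id.sub continuous_const).continuousAt))
  · exact ContinuousAt.div
      ((Real.continuous_sqrt.continuousAt).comp ((continuous_id.sub continuous_const).continuousAt))
      continuousAt_id one_ne_zero

lemma base_integrable : IntegrableOn (fun y : ℝ => Real.sqrt (y - 1) / y ^ 2) (Ioi 1) volume :=
  integrableOn_Ioi_deriv_of_nonneg Fad_cont (fun y hy => Fad_deriv hy)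
    (fun y _ => by positivity) Fad_tendsto

lemma base_integral : ∫ y in Ioi (1:ℝ), Real.sqrt (y - 1) / y ^ 2 = Real.pi / 2 := by
  rw [integral_Ioi_of_hasDerivAt_of_nonneg Fad_cont (fun y hy => Fad_deriv hy)
    (fun y _ => by positivity) Fad_tendsto]
  simp [Fad]

end oned

lemma tendsto_main (h : ℝ → ℝ) (hm : Measurable h) (C : ℝ) (hC : ∀ y, |h y| ≤ C) :
    Tendsto (fun ρ : ℝ => ∫ y in Ioi (1:ℝ),
        Real.exp (-ρ) * (2 * Real.sqrt ((Real.exp (2*ρ) - y) * (y - 1)) * (h y / y ^ 2)))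
      atTop (nhds (∫ y in Ioi (1:ℝ), 2 * Real.sqrt (y - 1) * (h y / y ^ 2))) := by
  have hC0 : 0 ≤ C := (abs_nonneg _).trans (hC 0)
  -- rewrite the integrand
  have key : ∀ ρ : ℝ, ∀ y ∈ Ioi (1:ℝ),
      Real.exp (-ρ) * (2 * Real.sqrt ((Real.exp (2*ρ) - y) * (y - 1)) * (h y / y ^ 2))
      = 2 * Real.sqrt ((1 - y * Real.exp (-(2*ρ))) * (y - 1)) * (h y / y ^ 2) := by
    intro ρ y _
    have hee : Real.exp (-(2*ρ)) * Real.exp (2*ρ) = 1 := by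
      rw [← Real.exp_add]; simp
    have h1 : Real.exp (-ρ) * Real.sqrt ((Real.exp (2*ρ) - y) * (y - 1))
        = Real.sqrt ((1 - y * Real.exp (-(2*ρ))) * (y - 1)) := by
      rw [show Real.exp (-ρ) = Real.sqrt (Real.exp (-(2*ρ))) by
        rw [show (-(2*ρ)) = (-ρ) + (-ρ) by ring, Real.exp_add, ← sq,
          Real.sqrt_sq (Real.exp_nonneg _)]]
      rw [← Real.sqrt_mul (Real.exp_nonneg _)]
      congr 1
      linear_combination (y - 1) * hee
    calc Real.exp (-ρ) * (2 * Real.sqrt ((Real.exp (2*ρ) - y) * (y - 1)) * (h y / y ^ 2))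
        = 2 * (Real.exp (-ρ) * Real.sqrt ((Real.exp (2*ρ) - y) * (y - 1))) * (h y / y ^ 2) := by
          ring
      _ = _ := by rw [h1]
  have arg_le : ∀ ρ : ℝ, ∀ y : ℝ, 1 < y →
      (1 - y * Real.exp (-(2*ρ))) * (y - 1) ≤ y - 1 := by
    intro ρ y hy
    have he : (0:ℝ) < Real.exp (-(2*ρ)) := Real.exp_pos _
    rcases le_or_gt (1 - y * Real.exp (-(2*ρ))) 0 with hle | hlt
    · exact (mul_nonpos_of_nonpos_of_nonneg hle (by linarith)).trans (by linarith)
    · nlinarith [mul_nonneg (mul_nonneg he.le (by linarith : (0:ℝ) ≤ y))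
        (by linarith : (0:ℝ) ≤ y - 1)]
  -- dominated convergence
  refine tendsto_integral_filter_of_dominated_convergence
    (bound := fun y => 2 * C * (Real.sqrt (y - 1) / y ^ 2)) ?_ ?_ ?_ ?_
  · refine Eventually.of_forall fun ρ => ?_
    refine Measurable.aestronglyMeasurable ?_
    exact (measurable_const.mul ((measurable_const.mul
      (((measurable_const.sub measurable_id).mul (measurable_id.sub measurable_const)).sqrt)).mul
      (hm.div (measurable_id.pow_const 2))))
  · refine Eventually.of_forall fun ρ => ?_
    refine (ae_restrict_iff' measurableSet_Ioi).2 (ae_of_all _ fun y hy => ?_)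
    rw [key ρ y hy]
    simp only [mem_Ioi] at hy
    have hy2 : (0:ℝ) < y ^ 2 := by positivity
    rw [Real.norm_eq_abs, abs_mul, abs_mul, abs_div,
      _root_.abs_of_nonneg (Real.sqrt_nonneg _), _root_.abs_of_nonneg (by norm_num : (0:ℝ) ≤ 2),
      _root_.abs_of_nonneg hy2.le]
    calc 2 * Real.sqrt ((1 - y * Real.exp (-(2*ρ))) * (y - 1)) * (|h y| / y ^ 2)
        ≤ 2 * Real.sqrt (y - 1) * (C / y ^ 2) := by
          gcongr
          · exact arg_le ρ y hy
          · exact hC y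
      _ = 2 * C * (Real.sqrt (y - 1) / y ^ 2) := by ring
  · exact base_integrable.const_mul (2 * C)
  · refine (ae_restrict_iff' measurableSet_Ioi).2 (ae_of_all _ fun y hy => ?_)
    have hy1 : (1:ℝ) < y := hy
    have htend : Tendsto (fun ρ : ℝ => Real.exp (-(2*ρ))) atTop (nhds 0) := by
      refine Real.tendsto_exp_atBot.comp ?_
      exact (tendsto_neg_atTop_atBot.comp (tendsto_id.const_mul_atTop (by norm_num : (0:ℝ) < 2)))
    have hcont : Continuous (fun s : ℝ => 2 * Real.sqrt ((1 - y * s) * (y - 1)) * (h y / y ^ 2)) := by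
      continuity
    have := (hcont.tendsto 0).comp htend
    simp only [Function.comp_apply, mul_zero, sub_zero, one_mul] at this
    exact Tendsto.congr (fun ρ => (key ρ y hy).symm) this

lemma subst_lemma (g : ℝ → ℝ) :
    ∫ y in Ioi (1:ℝ), 2 * Real.sqrt (y - 1) * (g (Real.log y) / y ^ 2)
      = 2 * ∫ t in Ioi (0:ℝ), g t * Real.sqrt (Real.exp (-t) - Real.exp (-2 * t)) := by
  have himg : Real.exp '' Ioi (0:ℝ) = Ioi 1 := by
    ext y
    constructor
    · rintro ⟨t, ht, rfl⟩
      simp only [mem_Ioi] at *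
      calc (1:ℝ) = Real.exp 0 := by simp
        _ < Real.exp t := Real.exp_lt_exp.2 ht
    · intro hy
      simp only [mem_Ioi] at hy
      exact ⟨Real.log y, Real.log_pos hy, Real.exp_log (by linarith)⟩
  rw [← himg, integral_image_eq_integral_abs_deriv_smul measurableSet_Ioi
    (fun x _ => (Real.hasDerivAt_exp x).hasDerivWithinAt) Real.exp_injective.injOn,
    ← integral_const_mul]
  apply setIntegral_congr_fun measurableSet_Ioi
  intro t ht
  simp only [mem_Ioi] at ht
  have he : (0:ℝ) < Real.exp t := Real.exp_pos t
  have he1 : (0:ℝ) ≤ Real.exp t - 1 := by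
    have : Real.exp 0 ≤ Real.exp t := Real.exp_le_exp.2 ht.le
    simpa using this
  have h2 : Real.exp (-t) - Real.exp (-2 * t) = (Real.exp t - 1) * (Real.exp (-t)) ^ 2 := by
    rw [show (-2:ℝ) * t = (-t) + (-t) by ring, Real.exp_add, Real.exp_neg]
    field_simp
  dsimp only
  rw [Real.log_exp, smul_eq_mul, _root_.abs_of_pos he, h2,
    Real.sqrt_mul he1, Real.sqrt_sq (Real.exp_nonneg _), Real.exp_neg]
  field_simp

lemma denom_value : ∫ y in Ioi (1:ℝ), 2 * Real.sqrt (y - 1) * ((1:ℝ) / y ^ 2) = Real.pi := by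
  have : ∫ y in Ioi (1:ℝ), 2 * Real.sqrt (y - 1) * ((1:ℝ) / y ^ 2)
      = ∫ y in Ioi (1:ℝ), 2 * (Real.sqrt (y - 1) / y ^ 2) := by
    apply setIntegral_congr_fun measurableSet_Ioi
    intro y _
    ring
  rw [this, integral_const_mul, base_integral]
  ring

theorem averages_tendsto_of_boundedContinuous (g : BoundedContinuousFunction ℝ ℝ) :
    Tendsto
      (fun ρ : ℝ =>
        (1 / (hypArea (hypBall ρ)).toReal) *
          ∫ z in hypBall ρ, g (Real.log z.im) / z.im ^ 2 ∂volume)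
      atTop
      (nhds ((2 / Real.pi) * ∫ t in Set.Ioi (0 : ℝ),
        g t * Real.sqrt (Real.exp (-t) - Real.exp (-2 * t)))) := by
  set T := ∫ t in Set.Ioi (0 : ℝ), g t * Real.sqrt (Real.exp (-t) - Real.exp (-2 * t)) with hT
  set h : ℝ → ℝ := fun y => g (Real.log y) with hh
  have hm : Measurable h := g.continuous.measurable.comp Real.measurable_log
  have hb : ∀ y, |h y| ≤ ‖g‖ := fun y => by
    simpa [Real.norm_eq_abs] using g.norm_coe_le_norm (Real.log y)
  have hb1 : ∀ y : ℝ, |(1:ℝ)| ≤ 1 := fun _ => by norm_num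
  have tendN := tendsto_main h hm ‖g‖ hb
  have tendD := tendsto_main (fun _ => (1:ℝ)) measurable_const 1 hb1
  rw [denom_value] at tendD
  rw [show (∫ y in Ioi (1:ℝ), 2 * Real.sqrt (y - 1) * (h y / y ^ 2)) = 2 * T from
    subst_lemma g] at tendN
  have hquot := tendN.div tendD Real.pi_ne_zero
  have hlim : (2 * T) / Real.pi = 2 / Real.pi * T := by ring
  rw [hlim] at hquot
  refine Tendsto.congr' ?_ hquot
  filter_upwards [eventually_gt_atTop (0:ℝ)] with ρ hρ
  have hN : ∫ z in hypBall ρ, g (Real.log z.im) / z.im ^ 2 ∂volume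
      = ∫ y in Ioi (1:ℝ), 2 * Real.sqrt ((Real.exp (2*ρ) - y) * (y - 1)) * (h y / y ^ 2) :=
    disk_integral hρ h hm ‖g‖ hb
  have hD : (hypArea (hypBall ρ)).toReal
      = ∫ y in Ioi (1:ℝ), 2 * Real.sqrt ((Real.exp (2*ρ) - y) * (y - 1)) * ((1:ℝ) / y ^ 2) := by
    rw [hypArea_toReal hρ]
    exact disk_integral hρ (fun _ => 1) measurable_const 1 hb1
  simp only [Pi.div_apply]
  rw [integral_const_mul, integral_const_mul, hN, hD, one_div, ← div_eq_inv_mul]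
  exact mul_div_mul_left _ _ (Real.exp_ne_zero (-ρ))
end

section
/- Let 0 < R < R' < 1, let A = 1/log(R'/R), and let φ_{R,R'} : ℂ → ℝ be defined by φ_{R,R'}(z) = 1 if |z| ≤ R, φ_{R,R'}(z) = A·log(R'/|z|) if R ≤ |z| ≤ R', and φ_{R,R'}(z) = 0 if |z| ≥ R'. Then for every function f : ℂ → ℝ that is C² on a neighborhood of the closed disk {|z| ≤ R'}, ∫_𝔻 φ_{R,R'}(z) Δf(z) dLeb(z) = A ( ∫_0^{2π} f(R' e^{iθ}) dθ − ∫_0^{2π} f(R e^{iθ}) dθ ), where Δf denotes the Euclidean Laplacian of f. -/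
open Complex Metric Set MeasureTheory

/-- The Euclidean Laplacian `∂²f/∂x² + ∂²f/∂y²` of a function `f : ℂ → ℝ`. -/
noncomputable def lap (f : ℂ → ℝ) (z : ℂ) : ℝ :=
  fderiv ℝ (fun w => fderiv ℝ f w 1) z 1 +
    fderiv ℝ (fun w => fderiv ℝ f w Complex.I) z Complex.I

/-- The function `φ_{R,R'}`: equal to `1` on `{|z| ≤ R}`, to `A log(R'/|z|)` on
`{R ≤ |z| ≤ R'}` (with `A = 1/log(R'/R)`), and to `0` on `{|z| ≥ R'}`. -/
noncomputable def phiRR (R R' : ℝ) (z : ℂ) : ℝ :=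
  if ‖z‖ ≤ R then 1
  else if ‖z‖ ≤ R' then (1 / Real.log (R' / R)) * Real.log (R' / ‖z‖)
  else 0

/-! ### Auxiliary lemmas about `phiRR` -/

lemma phiRR_congr_abs (R R' : ℝ) {z w : ℂ} (h : ‖z‖ = ‖w‖) :
    phiRR R R' z = phiRR R R' w := by simp only [phiRR, h]

lemma phiRR_of_le (R R' : ℝ) {z : ℂ} (h : ‖z‖ ≤ R) : phiRR R R' z = 1 := by
  simp [phiRR, h]

lemma phiRR_of_gt (R R' : ℝ) {z : ℂ} (hR : R ≤ R') (h : R' < ‖z‖) :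
    phiRR R R' z = 0 := by
  rw [phiRR, if_neg (by linarith), if_neg (by linarith)]

lemma phiRR_eq_min (R R' : ℝ) (hR : 0 < R) (hRR' : R < R') (z : ℂ) :
    phiRR R R' z =
      min 1 (max 0 ((1 / Real.log (R' / R)) * Real.log (R' / max (‖z‖) R))) := by
  have hL : 0 < Real.log (R' / R) := Real.log_pos ((one_lt_div hR).2 hRR')
  set r := ‖z‖ with hr
  have hr0 : 0 ≤ r := norm_nonneg z
  rcases le_or_gt r R with h1 | h1
  · rw [phiRR_of_le _ _ h1, max_eq_right h1]
    rw [one_div, inv_mul_cancel₀ hL.ne']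
    simp
  · have hmax : max r R = r := max_eq_left h1.le
    rcases le_or_gt r R' with h2 | h2
    · have hrpos : 0 < r := hR.trans h1
      have hlog0 : 0 ≤ Real.log (R' / r) := Real.log_nonneg ((one_le_div hrpos).2 h2)
      have hlogle : Real.log (R' / r) ≤ Real.log (R' / R) := by
        apply Real.log_le_log (div_pos (hR.trans hRR') hrpos)
        exact div_le_div_of_nonneg_left (by linarith) hR h1.le
      have hle1 : (1 / Real.log (R' / R)) * Real.log (R' / r) ≤ 1 := by
        rw [one_div, inv_mul_le_iff₀ hL, mul_one]; exact hlogle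
      rw [phiRR, if_neg (not_le.2 h1), if_pos h2, hmax]
      rw [max_eq_right (mul_nonneg (one_div_nonneg.2 hL.le) hlog0), min_eq_right hle1]
    · have hrpos : 0 < r := hR.trans h1
      have hlogneg : Real.log (R' / r) < 0 :=
        Real.log_neg (div_pos (hR.trans hRR') hrpos) ((div_lt_one hrpos).2 h2)
      rw [phiRR_of_gt _ _ hRR'.le h2, hmax]
      have : (1 / Real.log (R' / R)) * Real.log (R' / r) ≤ 0 := by
        nlinarith [mul_pos (one_div_pos.2 hL) (neg_pos.2 hlogneg)]
      rw [max_eq_left this]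
      simp

lemma continuous_phiRR (R R' : ℝ) (hR : 0 < R) (hRR' : R < R') :
    Continuous (phiRR R R') := by
  have : Continuous (fun z : ℂ => min 1 (max 0 ((1 / Real.log (R' / R)) *
      Real.log (R' / max (‖z‖) R)))) := by
    apply Continuous.min continuous_const
    apply Continuous.max continuous_const
    apply Continuous.mul continuous_const
    apply Continuous.log
    · exact continuous_const.div (Continuous.max continuous_norm continuous_const)
        (fun z => (lt_max_of_lt_right hR).ne')
    · intro z
      have : 0 < max (‖z‖) R := lt_max_of_lt_right hR
      exact (div_pos (hR.trans hRR') this).ne'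
  exact this.congr (fun z => (phiRR_eq_min R R' hR hRR' z).symm)

/-! ### Rotational invariance of the Laplacian quadratic form -/

lemma rot_invariance (Φ : ℂ →L[ℝ] ℂ →L[ℝ] ℝ) (θ : ℝ) :
    Φ (Complex.exp (θ * I)) (Complex.exp (θ * I)) +
      Φ (I * Complex.exp (θ * I)) (I * Complex.exp (θ * I)) = Φ 1 1 + Φ I I := by
  have he : Complex.exp (θ * I) = (Real.cos θ) • (1 : ℂ) + (Real.sin θ) • I := by
    rw [Complex.exp_mul_I]
    simp [Complex.real_smul, Complex.ofReal_cos, Complex.ofReal_sin]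
  have hIe : I * Complex.exp (θ * I) = (-Real.sin θ) • (1 : ℂ) + (Real.cos θ) • I := by
    rw [he]
    simp [Complex.real_smul]
    ring_nf
    simp [Complex.I_sq]
    ring
  rw [hIe, he]
  simp only [map_add, _root_.map_smul, ContinuousLinearMap.add_apply,
    ContinuousLinearMap.smul_apply, ContinuousLinearMap.coe_smul', Pi.smul_apply, smul_eq_mul]
  linear_combination (Φ 1 1 + Φ I I) * (Real.sin_sq_add_cos_sq θ)

/-! ### Derivative lemmas -/

lemma hB {f : ℂ → ℝ} {U : Set ℂ} (hU : IsOpen U) (hf : ContDiffOn ℝ 2 f U) {z : ℂ} (hz : z ∈ U) :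
    HasFDerivAt (fderiv ℝ f) (fderiv ℝ (fderiv ℝ f) z) z := by
  have h1 : ContDiffAt ℝ 2 f z := hf.contDiffAt (hU.mem_nhds hz)
  have h2 : ContDiffAt ℝ 1 (fderiv ℝ f) z := h1.fderiv_right (by norm_num)
  exact (h2.differentiableAt (by norm_num)).hasFDerivAt

lemma hD {f : ℂ → ℝ} {U : Set ℂ} (hU : IsOpen U) (hf : ContDiffOn ℝ 2 f U) {z : ℂ} (hz : z ∈ U) :
    HasFDerivAt f (fderiv ℝ f z) z := by
  have h1 : ContDiffAt ℝ 2 f z := hf.contDiffAt (hU.mem_nhds hz)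
  exact (h1.differentiableAt (by norm_num)).hasFDerivAt

lemma lap_eq {f : ℂ → ℝ} {U : Set ℂ} (hU : IsOpen U) (hf : ContDiffOn ℝ 2 f U) {z : ℂ}
    (hz : z ∈ U) :
    lap f z = fderiv ℝ (fderiv ℝ f) z 1 1 + fderiv ℝ (fderiv ℝ f) z I I := by
  have key : ∀ v : ℂ, fderiv ℝ (fun w => fderiv ℝ f w v) z =
      (fderiv ℝ (fderiv ℝ f) z).flip v := by
    intro v
    have h := (hB hU hf hz).clm_apply (hasFDerivAt_const v z)
    simpa using h.fderiv
  rw [lap, key 1, key I]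
  simp [ContinuousLinearMap.flip_apply]

lemma gamma_hasDerivAt (e : ℂ) (s : ℝ) : HasDerivAt (fun s : ℝ => (s : ℂ) * e) e s := by
  have := (hasDerivAt_id s).smul_const e
  simpa [Complex.real_smul] using this

lemma circ_hasDerivAt (r : ℝ) (t : ℝ) :
    HasDerivAt (fun t : ℝ => (r : ℂ) * Complex.exp (t * I))
      ((r : ℂ) * Complex.exp (t * I) * I) t := by
  have h := hasDerivAt_circleMap 0 r t
  have : circleMap 0 r = fun t : ℝ => (r : ℂ) * Complex.exp (t * I) := by
    funext x; simp [circleMap]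
  rw [this] at h
  simpa [circleMap] using h

lemma w_hasDerivAt {f : ℂ → ℝ} {U : Set ℂ} (hU : IsOpen U) (hf : ContDiffOn ℝ 2 f U)
    (e : ℂ) {s : ℝ} (hz : (s : ℂ) * e ∈ U) :
    HasDerivAt (fun s : ℝ => f ((s : ℂ) * e)) (fderiv ℝ f ((s : ℂ) * e) e) s :=
  (hD hU hf hz).comp_hasDerivAt s (gamma_hasDerivAt e s)

lemma P_hasDerivAt {f : ℂ → ℝ} {U : Set ℂ} (hU : IsOpen U) (hf : ContDiffOn ℝ 2 f U)
    (e : ℂ) {s : ℝ} (hz : (s : ℂ) * e ∈ U) :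
    HasDerivAt (fun s : ℝ => s * (fderiv ℝ f ((s : ℂ) * e) e))
      (fderiv ℝ f ((s : ℂ) * e) e + s * (fderiv ℝ (fderiv ℝ f) ((s : ℂ) * e) e e)) s := by
  have h1 : HasDerivAt (fun s : ℝ => fderiv ℝ f ((s : ℂ) * e))
      (fderiv ℝ (fderiv ℝ f) ((s : ℂ) * e) e) s :=
    (hB hU hf hz).comp_hasDerivAt s (gamma_hasDerivAt e s)
  have h2 : HasDerivAt (fun s : ℝ => fderiv ℝ f ((s : ℂ) * e) e)
      (fderiv ℝ (fderiv ℝ f) ((s : ℂ) * e) e e) s := by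
    have := h1.clm_apply (hasDerivAt_const s e)
    simpa using this
  have := (hasDerivAt_id' s).mul h2
  exact this.congr_deriv (by simp)

lemma Q_hasDerivAt {f : ℂ → ℝ} {U : Set ℂ} (hU : IsOpen U) (hf : ContDiffOn ℝ 2 f U)
    (r : ℝ) {t : ℝ} (hz : (r : ℂ) * Complex.exp (t * I) ∈ U) :
    HasDerivAt (fun t : ℝ => fderiv ℝ f ((r : ℂ) * Complex.exp (t * I))
        (I * ((r : ℂ) * Complex.exp (t * I))))
      (fderiv ℝ (fderiv ℝ f) ((r : ℂ) * Complex.exp (t * I))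
          (((r : ℂ) * Complex.exp (t * I)) * I) (I * ((r : ℂ) * Complex.exp (t * I))) -
        fderiv ℝ f ((r : ℂ) * Complex.exp (t * I)) ((r : ℂ) * Complex.exp (t * I))) t := by
  set z := (r : ℂ) * Complex.exp (t * I) with hzdef
  have hc := circ_hasDerivAt r t
  have h1 : HasDerivAt (fun t : ℝ => fderiv ℝ f ((r : ℂ) * Complex.exp (t * I)))
      (fderiv ℝ (fderiv ℝ f) z (z * I)) t := (hB hU hf hz).comp_hasDerivAt t hc
  have h2 : HasDerivAt (fun t : ℝ => I * ((r : ℂ) * Complex.exp (t * I))) (I * (z * I)) t :=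
    hc.const_mul I
  have h3 := h1.clm_apply h2
  have h4 : I * (z * I) = -z := by
    rw [mul_comm z I, ← mul_assoc, Complex.I_mul_I, neg_one_mul]
  rw [h4] at h3
  simpa [map_neg, sub_eq_add_neg] using h3

/-! ### Continuity lemmas -/

lemma contD {f : ℂ → ℝ} {U : Set ℂ} (hU : IsOpen U) (hf : ContDiffOn ℝ 2 f U) :
    ContinuousOn (fderiv ℝ f) U :=
  hf.continuousOn_fderiv_of_isOpen hU (by norm_num)

lemma contB {f : ℂ → ℝ} {U : Set ℂ} (hU : IsOpen U) (hf : ContDiffOn ℝ 2 f U) :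
    ContinuousOn (fderiv ℝ (fderiv ℝ f)) U :=
  (hf.fderiv_of_isOpen hU (le_refl 2)).continuousOn_fderiv_of_isOpen hU le_rfl

lemma contLap {f : ℂ → ℝ} {U : Set ℂ} (hU : IsOpen U) (hf : ContDiffOn ℝ 2 f U) :
    ContinuousOn (lap f) U := by
  have h : ContinuousOn
      (fun z => fderiv ℝ (fderiv ℝ f) z 1 1 + fderiv ℝ (fderiv ℝ f) z I I) U := by
    apply ContinuousOn.add
    · exact (((contB hU hf).clm_apply continuousOn_const).clm_apply continuousOn_const)
    · exact (((contB hU hf).clm_apply continuousOn_const).clm_apply continuousOn_const)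
  exact h.congr (fun z hz => lap_eq hU hf hz)

theorem green_riesz_for_phi (R R' : ℝ) (hR : 0 < R) (hRR' : R < R') (hR' : R' < 1)
    (A : ℝ) (hA : A = 1 / Real.log (R' / R))
    (f : ℂ → ℝ) (U : Set ℂ) (hU : IsOpen U) (hUsub : Metric.closedBall (0 : ℂ) R' ⊆ U)
    (hf : ContDiffOn ℝ 2 f U) :
    ∫ z in Metric.ball (0 : ℂ) 1, phiRR R R' z * lap f z ∂volume =
      A * ((∫ θ in (0 : ℝ)..(2 * Real.pi), f (R' * Complex.exp (θ * Complex.I))) -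
        ∫ θ in (0 : ℝ)..(2 * Real.pi), f (R * Complex.exp (θ * Complex.I))) := by
  have hR'0 : 0 < R' := hR.trans hRR'
  have hL : 0 < Real.log (R' / R) := Real.log_pos ((one_lt_div hR).2 hRR')
  have hAL : A * Real.log (R' / R) = 1 := by rw [hA]; field_simp
  have hmemU : ∀ w : ℂ, ‖w‖ ≤ R' → w ∈ U := by
    intro w hw
    exact hUsub (by simpa [mem_closedBall_zero_iff] using hw)
  have hcphi : Continuous (phiRR R R') := continuous_phiRR R R' hR hRR'
  set G : ℂ → ℝ := fun z => phiRR R R' z * lap f z with hGdef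
  have hGzero : ∀ w : ℂ, R' < ‖w‖ → G w = 0 := by
    intro w hw; simp [hGdef, phiRR_of_gt R R' hRR'.le hw]
  have hcontG : Continuous G := by
    rw [continuous_iff_continuousAt]; intro z
    by_cases hz : z ∈ U
    · exact ContinuousAt.mul hcphi.continuousAt ((contLap hU hf).continuousAt (hU.mem_nhds hz))
    · have hz' : R' < ‖z‖ := by
        by_contra h; push_neg at h; exact hz (hmemU z h)
      have hopen : IsOpen {w : ℂ | R' < ‖w‖} :=
        isOpen_lt continuous_const continuous_norm
      have hev : ∀ᶠ w in nhds z, G w = 0 := by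
        filter_upwards [hopen.mem_nhds hz'] with w hw using hGzero w hw
      exact (Filter.EventuallyEq.continuousAt hev)
  -- Step 1 : pass to an integral over all of ℂ
  have step1 : ∫ z in Metric.ball (0:ℂ) 1, phiRR R R' z * lap f z = ∫ z, G z := by
    apply setIntegral_eq_integral_of_forall_compl_eq_zero
    intro z hz
    apply hGzero
    have : (1:ℝ) ≤ ‖z‖ := by
      simpa [mem_ball_zero_iff] using hz
    linarith
  -- polar coordinates
  set E : ℝ → ℂ := fun θ => Complex.exp (θ * I) with hEdef
  set W : ℝ × ℝ → ℝ := fun p => p.1 * G ((p.1 : ℂ) * E p.2) with hWdef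
  set T : Set (ℝ × ℝ) := Ioi (0:ℝ) ×ˢ Ioo (-Real.pi) Real.pi with hTdef
  have hTmeas : MeasurableSet T := measurableSet_Ioi.prod measurableSet_Ioo
  have step2 : ∫ z, G z = ∫ p in T, W p := by
    rw [← Complex.integral_comp_polarCoord_symm G, polarCoord_target]
    apply setIntegral_congr_fun (measurableSet_Ioi.prod measurableSet_Ioo)
    intro p _
    have hsymm : Complex.polarCoord.symm p = (p.1 : ℂ) * Complex.exp (p.2 * I) := by
      rw [Complex.polarCoord_symm_apply, Complex.exp_mul_I]; push_cast; ring
    simp only [hsymm, hWdef, smul_eq_mul]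
    rfl
  -- the two pieces
  set H1 : ℝ × ℝ → ℝ := fun p => phiRR R R' ((p.1 : ℂ)) *
      (fderiv ℝ f ((p.1:ℂ) * E p.2) (E p.2) +
        p.1 * (fderiv ℝ (fderiv ℝ f) ((p.1:ℂ) * E p.2) (E p.2) (E p.2))) with hH1def
  set H2 : ℝ × ℝ → ℝ := fun p => W p - H1 p with hH2def
  have habsE : ∀ θ : ℝ, ‖E θ‖ = 1 := fun θ => Complex.norm_exp_ofReal_mul_I θ
  have habsZ : ∀ p : ℝ × ℝ, ‖(p.1:ℂ) * E p.2‖ = |p.1| := by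
    intro p; rw [norm_mul, habsE, Complex.norm_real, Real.norm_eq_abs, mul_one]
  have hphiZ : ∀ p : ℝ × ℝ, phiRR R R' ((p.1:ℂ) * E p.2) = phiRR R R' ((p.1:ℂ)) := by
    intro p
    exact phiRR_congr_abs R R' (by rw [habsZ, Complex.norm_real, Real.norm_eq_abs])
  have hZU : ∀ p : ℝ × ℝ, |p.1| ≤ R' → ((p.1:ℂ) * E p.2) ∈ U := by
    intro p hp; exact hmemU _ (by rw [habsZ]; exact hp)
  have hphio : ∀ r : ℝ, R' < r → phiRR R R' ((r:ℂ)) = 0 := by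
    intro r hr
    exact phiRR_of_gt R R' hRR'.le (by rw [Complex.norm_real, Real.norm_eq_abs, abs_of_pos (hR'0.trans hr)]; exact hr)
  -- integrability
  have hEcont : Continuous E := by
    rw [hEdef]
    exact Complex.continuous_exp.comp (Complex.continuous_ofReal.mul continuous_const)
  have hZcont : Continuous (fun p : ℝ × ℝ => (p.1:ℂ) * E p.2) :=
    (Complex.continuous_ofReal.comp continuous_fst).mul (hEcont.comp continuous_snd)
  have hintOn : ∀ F : ℝ × ℝ → ℝ,
      ContinuousOn F (Icc (0:ℝ) R' ×ˢ Icc (-Real.pi) Real.pi) →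
      (∀ p : ℝ × ℝ, R' < p.1 → F p = 0) → IntegrableOn F T := by
    intro F hFc hFz
    have h1 : IntegrableOn F (Ioc (0:ℝ) R' ×ˢ Ioo (-Real.pi) Real.pi) :=
      (hFc.integrableOn_compact (isCompact_Icc.prod isCompact_Icc)).mono_set
        (prod_mono Ioc_subset_Icc_self Ioo_subset_Icc_self)
    have h2 : IntegrableOn F (Ioi R' ×ˢ Ioo (-Real.pi) Real.pi) := by
      have heq : EqOn F (fun _ => (0:ℝ)) (Ioi R' ×ˢ Ioo (-Real.pi) Real.pi) :=
        fun p hp => hFz p hp.1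
      exact (integrableOn_congr_fun heq (measurableSet_Ioi.prod measurableSet_Ioo)).2
        (integrableOn_zero)
    have h3 := h1.union h2
    rwa [← union_prod, Ioc_union_Ioi_eq_Ioi hR'0.le] at h3
  have hWzero : ∀ p : ℝ × ℝ, R' < p.1 → W p = 0 := by
    intro p hp
    have : G ((p.1:ℂ) * E p.2) = 0 := by
      apply hGzero
      rw [habsZ, abs_of_pos (hR'0.trans hp)]
      exact hp
    simp [hWdef, this]
  have hintW : IntegrableOn W T := by
    apply hintOn W _ hWzero
    exact (continuous_fst.mul (hcontG.comp hZcont)).continuousOn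
  have hKU : ∀ p ∈ Icc (0:ℝ) R' ×ˢ Icc (-Real.pi) Real.pi, ((p.1:ℂ) * E p.2) ∈ U :=
    fun p hp => hZU p (by rw [_root_.abs_of_nonneg hp.1.1]; exact hp.1.2)
  have hintH1 : IntegrableOn H1 T := by
    apply hintOn H1 _ (fun p hp => by simp [hH1def, hphio p.1 hp])
    apply ContinuousOn.mul
    · exact (hcphi.comp (Complex.continuous_ofReal.comp continuous_fst)).continuousOn
    · apply ContinuousOn.add
      · exact ((contD hU hf).comp hZcont.continuousOn hKU).clm_apply
          (hEcont.comp continuous_snd).continuousOn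
      · exact (continuous_fst.continuousOn).mul
          ((((contB hU hf).comp hZcont.continuousOn hKU).clm_apply
            (hEcont.comp continuous_snd).continuousOn).clm_apply
            (hEcont.comp continuous_snd).continuousOn)
  have hintH2 : IntegrableOn H2 T := hintW.sub hintH1
  -- radial computation
  have radial : ∀ θ : ℝ, ∫ r in Ioi (0:ℝ), H1 (r, θ) =
      A * (f ((R':ℂ) * E θ) - f ((R:ℂ) * E θ)) := by
    intro θ
    have hme : ∀ s : ℝ, |s| ≤ R' → ((s:ℂ) * E θ) ∈ U := fun s hs => hZU (s, θ) hs
    have hγ : Continuous (fun s : ℝ => (s:ℂ) * E θ) :=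
      Complex.continuous_ofReal.mul continuous_const
    have mapsTo : ∀ s ∈ Icc (0:ℝ) R', ((s:ℂ) * E θ) ∈ U :=
      fun s hs => hme s (by rw [_root_.abs_of_nonneg hs.1]; exact hs.2)
    have contd1 : ContinuousOn (fun s : ℝ => fderiv ℝ f ((s:ℂ) * E θ) (E θ)) (Icc 0 R') :=
      ((contD hU hf).comp hγ.continuousOn mapsTo).clm_apply continuousOn_const
    have contB2 : ContinuousOn
        (fun s : ℝ => fderiv ℝ (fderiv ℝ f) ((s:ℂ) * E θ) (E θ) (E θ)) (Icc 0 R') :=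
      (((contB hU hf).comp hγ.continuousOn mapsTo).clm_apply continuousOn_const).clm_apply
        continuousOn_const
    have contp : ContinuousOn (fun s : ℝ => fderiv ℝ f ((s:ℂ) * E θ) (E θ) +
        s * fderiv ℝ (fderiv ℝ f) ((s:ℂ) * E θ) (E θ) (E θ)) (Icc 0 R') :=
      contd1.add ((continuous_id.continuousOn).mul contB2)
    have hsub1 : uIcc (0:ℝ) R ⊆ Icc (0:ℝ) R' := by
      rw [uIcc_of_le hR.le]; exact Icc_subset_Icc le_rfl hRR'.le
    have hsub2 : uIcc R R' ⊆ Icc (0:ℝ) R' := by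
      rw [uIcc_of_le hRR'.le]; exact Icc_subset_Icc hR.le le_rfl
    have iint1 : IntervalIntegrable (fun s : ℝ => fderiv ℝ f ((s:ℂ) * E θ) (E θ) +
        s * fderiv ℝ (fderiv ℝ f) ((s:ℂ) * E θ) (E θ) (E θ)) volume 0 R :=
      (contp.mono hsub1).intervalIntegrable
    have iint2 : IntervalIntegrable (fun s : ℝ => fderiv ℝ f ((s:ℂ) * E θ) (E θ) +
        s * fderiv ℝ (fderiv ℝ f) ((s:ℂ) * E θ) (E θ) (E θ)) volume R R' :=
      (contp.mono hsub2).intervalIntegrable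
    have iintd1 : IntervalIntegrable (fun s : ℝ => fderiv ℝ f ((s:ℂ) * E θ) (E θ)) volume R R' :=
      (contd1.mono hsub2).intervalIntegrable
    have contH : ContinuousOn (fun r : ℝ => H1 (r, θ)) (Icc 0 R') := by
      simp only [hH1def]
      exact ((hcphi.comp Complex.continuous_ofReal).continuousOn).mul contp
    have iintH1 : IntervalIntegrable (fun r : ℝ => H1 (r, θ)) volume 0 R :=
      (contH.mono hsub1).intervalIntegrable
    have iintH2 : IntervalIntegrable (fun r : ℝ => H1 (r, θ)) volume R R' :=
      (contH.mono hsub2).intervalIntegrable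
    -- the piece on [0, R]
    have piece1 : ∫ r in (0:ℝ)..R, H1 (r, θ) = R * fderiv ℝ f ((R:ℂ) * E θ) (E θ) := by
      have heq : EqOn (fun r : ℝ => H1 (r, θ)) (fun s : ℝ => fderiv ℝ f ((s:ℂ) * E θ) (E θ) +
          s * fderiv ℝ (fderiv ℝ f) ((s:ℂ) * E θ) (E θ) (E θ)) (uIcc 0 R) := by
        intro s hs
        have hs' := hsub1 hs
        have h1 : phiRR R R' ((s:ℂ)) = 1 := by
          apply phiRR_of_le
          rw [Complex.norm_real, Real.norm_eq_abs, _root_.abs_of_nonneg hs'.1]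
          rw [uIcc_of_le hR.le] at hs
          exact hs.2
        simp only [hH1def, h1, one_mul]
      rw [intervalIntegral.integral_congr heq]
      rw [intervalIntegral.integral_eq_sub_of_hasDerivAt
        (f := fun s : ℝ => s * fderiv ℝ f ((s:ℂ) * E θ) (E θ))
        (fun s hs => P_hasDerivAt hU hf (E θ)
          (hme s (by
            have hs' := hsub1 hs
            rw [_root_.abs_of_nonneg hs'.1]; exact hs'.2))) iint1]
      simp
    -- the piece on [R, R']
    have piece2 : ∫ r in R..R', H1 (r, θ) = -(R * fderiv ℝ f ((R:ℂ) * E θ) (E θ)) +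
        A * (f ((R':ℂ) * E θ) - f ((R:ℂ) * E θ)) := by
      have heq : EqOn (fun r : ℝ => H1 (r, θ))
          (fun r : ℝ => (A * (Real.log R' - Real.log r)) *
            (fderiv ℝ f ((r:ℂ) * E θ) (E θ) +
              r * fderiv ℝ (fderiv ℝ f) ((r:ℂ) * E θ) (E θ) (E θ))) (uIcc R R') := by
        intro s hs
        rw [uIcc_of_le hRR'.le] at hs
        have hspos : 0 < s := lt_of_lt_of_le hR hs.1
        have habs : ‖(s:ℂ)‖ = s := by
          rw [Complex.norm_real, Real.norm_eq_abs, _root_.abs_of_pos hspos]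
        have hphi : phiRR R R' ((s:ℂ)) = A * (Real.log R' - Real.log s) := by
          rcases eq_or_lt_of_le hs.1 with hsR | hsR
          · rw [← hsR]
            rw [phiRR_of_le R R' (by rw [Complex.norm_real, Real.norm_eq_abs, _root_.abs_of_pos hR])]
            rw [← Real.log_div hR'0.ne' hR.ne']
            exact hAL.symm
          · rw [phiRR, habs, if_neg (not_le.2 hsR), if_pos hs.2]
            rw [Real.log_div hR'0.ne' hspos.ne', hA]
        simp only [hH1def, hphi]
      rw [intervalIntegral.integral_congr heq]
      have hu : ∀ x ∈ uIcc R R', HasDerivAt (fun r : ℝ => A * (Real.log R' - Real.log r))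
          (A * (-x⁻¹)) x := by
        intro x hx
        rw [uIcc_of_le hRR'.le] at hx
        have hxpos : 0 < x := lt_of_lt_of_le hR hx.1
        exact ((Real.hasDerivAt_log hxpos.ne').const_sub (Real.log R')).const_mul A
      have hv : ∀ x ∈ uIcc R R', HasDerivAt (fun s : ℝ => s * fderiv ℝ f ((s:ℂ) * E θ) (E θ))
          (fderiv ℝ f ((x:ℂ) * E θ) (E θ) +
            x * fderiv ℝ (fderiv ℝ f) ((x:ℂ) * E θ) (E θ) (E θ)) x := by
        intro x hx
        have hx' := hsub2 hx
        exact P_hasDerivAt hU hf (E θ) (hme x (by rw [_root_.abs_of_nonneg hx'.1]; exact hx'.2))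
      have hu'int : IntervalIntegrable (fun x : ℝ => A * (-x⁻¹)) volume R R' := by
        apply ContinuousOn.intervalIntegrable
        apply ContinuousOn.mul continuousOn_const
        apply ContinuousOn.neg
        apply ContinuousOn.inv₀ (continuous_id.continuousOn)
        intro x hx
        rw [uIcc_of_le hRR'.le] at hx
        exact (lt_of_lt_of_le hR hx.1).ne'
      have parts := intervalIntegral.integral_mul_deriv_eq_deriv_mul hu hv hu'int iint2
      rw [parts]
      have huR' : A * (Real.log R' - Real.log R') = 0 := by simp
      have huR : A * (Real.log R' - Real.log R) = 1 := by
        rw [← Real.log_div hR'0.ne' hR.ne']; exact hAL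
      rw [huR', huR, zero_mul, one_mul]
      have heq2 : EqOn (fun x : ℝ => (A * (-x⁻¹)) * (x * fderiv ℝ f ((x:ℂ) * E θ) (E θ)))
          (fun x : ℝ => -(A * fderiv ℝ f ((x:ℂ) * E θ) (E θ))) (uIcc R R') := by
        intro x hx
        rw [uIcc_of_le hRR'.le] at hx
        have hxne : x ≠ 0 := (lt_of_lt_of_le hR hx.1).ne'
        field_simp
      rw [intervalIntegral.integral_congr heq2]
      rw [intervalIntegral.integral_neg]
      rw [intervalIntegral.integral_const_mul]
      rw [intervalIntegral.integral_eq_sub_of_hasDerivAt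
        (f := fun s : ℝ => f ((s:ℂ) * E θ))
        (fun s hs => w_hasDerivAt hU hf (E θ)
          (hme s (by
            have hs' := hsub2 hs
            rw [_root_.abs_of_nonneg hs'.1]; exact hs'.2))) iintd1]
      ring
    calc ∫ r in Ioi (0:ℝ), H1 (r, θ)
        = ∫ r in Ioc (0:ℝ) R', H1 (r, θ) := by
          apply setIntegral_eq_of_subset_of_forall_diff_eq_zero measurableSet_Ioi
            Ioc_subset_Ioi_self
          intro x hx
          have hx1 : 0 < x := hx.1
          have hx2 : R' < x := by
            by_contra h
            push_neg at h
            exact hx.2 ⟨hx1, h⟩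
          simp [hH1def, hphio x hx2]
      _ = ∫ r in (0:ℝ)..R', H1 (r, θ) := (intervalIntegral.integral_of_le hR'0.le).symm
      _ = (∫ r in (0:ℝ)..R, H1 (r, θ)) + ∫ r in R..R', H1 (r, θ) :=
          (intervalIntegral.integral_add_adjacent_intervals iintH1 iintH2).symm
      _ = A * (f ((R':ℂ) * E θ) - f ((R:ℂ) * E θ)) := by rw [piece1, piece2]; ring
  -- angular computation
  have angular : ∀ r ∈ Ioi (0:ℝ), ∫ θ in Ioo (-Real.pi) Real.pi, H2 (r, θ) = 0 := by
    intro r hr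
    rw [mem_Ioi] at hr
    rcases le_or_gt r R' with hrR' | hrR'
    · -- 0 < r ≤ R'
      have hmem : ∀ t : ℝ, (r:ℂ) * E t ∈ U :=
        fun t => hZU (r, t) (by rw [_root_.abs_of_pos hr]; exact hrR')
      set q : ℝ → ℝ := fun t => fderiv ℝ (fderiv ℝ f) ((r:ℂ) * E t) (((r:ℂ) * E t) * I)
          (I * ((r:ℂ) * E t)) - fderiv ℝ f ((r:ℂ) * E t) ((r:ℂ) * E t) with hqdef
      have hQ : ∀ t : ℝ, HasDerivAt
          (fun t : ℝ => fderiv ℝ f ((r:ℂ) * E t) (I * ((r:ℂ) * E t))) (q t) t := by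
        intro t
        simp only [hqdef, hEdef]
        exact Q_hasDerivAt hU hf r (by simpa [hEdef] using hmem t)
      have hqcont : Continuous q := by
        rw [hqdef]
        apply Continuous.sub
        · apply Continuous.clm_apply
          · apply Continuous.clm_apply
            · exact (contB hU hf).comp_continuous (continuous_const.mul hEcont) hmem
            · exact (continuous_const.mul hEcont).mul continuous_const
          · exact continuous_const.mul (continuous_const.mul hEcont)
        · exact ((contD hU hf).comp_continuous (continuous_const.mul hEcont) hmem).clm_apply
            (continuous_const.mul hEcont)
      have hqint : ∫ t in (-Real.pi)..Real.pi, q t = 0 := by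
        rw [intervalIntegral.integral_eq_sub_of_hasDerivAt (fun t _ => hQ t)
          (hqcont.intervalIntegrable _ _)]
        have he1 : E Real.pi = -1 := by rw [hEdef]; exact Complex.exp_pi_mul_I
        have he2 : E (-Real.pi) = -1 := by
          rw [hEdef]
          push_cast
          rw [neg_mul, Complex.exp_neg, Complex.exp_pi_mul_I]
          norm_num
        simp only [he1, he2, sub_self]
      have hident : ∀ t : ℝ, H2 (r, t) = (phiRR R R' ((r:ℂ)) / r) * q t := by
        intro t
        have hlap : lap f ((r:ℂ) * E t) =
            fderiv ℝ (fderiv ℝ f) ((r:ℂ) * E t) (E t) (E t) +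
            fderiv ℝ (fderiv ℝ f) ((r:ℂ) * E t) (I * E t) (I * E t) := by
          rw [lap_eq hU hf (hmem t)]
          have := rot_invariance (fderiv ℝ (fderiv ℝ f) ((r:ℂ) * E t)) t
          rw [hEdef]
          exact this.symm
        have hsm1 : ((r:ℂ) * E t) * I = r • (I * E t) := by rw [Complex.real_smul]; ring
        have hsm2 : I * ((r:ℂ) * E t) = r • (I * E t) := by rw [Complex.real_smul]; ring
        have e1 : fderiv ℝ (fderiv ℝ f) ((r:ℂ) * E t) (((r:ℂ) * E t) * I) (I * ((r:ℂ) * E t)) =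
            r * (r * (fderiv ℝ (fderiv ℝ f) ((r:ℂ) * E t) (I * E t) (I * E t))) := by
          rw [hsm1, hsm2]
          simp only [_root_.map_smul, ContinuousLinearMap.coe_smul', Pi.smul_apply, smul_eq_mul]
        have e2 : fderiv ℝ f ((r:ℂ) * E t) ((r:ℂ) * E t) =
            r * fderiv ℝ f ((r:ℂ) * E t) (E t) := by
          have h := (fderiv ℝ f ((r:ℂ) * E t)).map_smul r (E t)
          rw [Complex.real_smul] at h
          rw [h, smul_eq_mul]
        have hq : q t = r * (r * (fderiv ℝ (fderiv ℝ f) ((r:ℂ) * E t) (I * E t) (I * E t))) -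
            r * fderiv ℝ f ((r:ℂ) * E t) (E t) := by
          simp only [hqdef]; rw [e1, e2]
        simp only [hH2def, hWdef, hH1def, hGdef]
        rw [hphiZ (r, t), hlap, hq]
        field_simp
        ring
      calc ∫ t in Ioo (-Real.pi) Real.pi, H2 (r, t)
          = ∫ t in Ioo (-Real.pi) Real.pi, (phiRR R R' ((r:ℂ)) / r) * q t := by
            exact setIntegral_congr_fun measurableSet_Ioo (fun t _ => hident t)
        _ = (phiRR R R' ((r:ℂ)) / r) * ∫ t in Ioo (-Real.pi) Real.pi, q t := by
            exact integral_const_mul _ _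
        _ = 0 := by
            rw [← integral_Ioc_eq_integral_Ioo,
              ← intervalIntegral.integral_of_le (by linarith [Real.pi_pos] : -Real.pi ≤ Real.pi),
              hqint, mul_zero]
    · -- R' < r
      have hzero : ∀ t : ℝ, H2 (r, t) = 0 := by
        intro t
        have h1 : W (r, t) = 0 := hWzero (r, t) hrR'
        have h2 : H1 (r, t) = 0 := by simp [hH1def, hphio r hrR']
        simp [hH2def, h1, h2]
      simp only [hzero, integral_zero]
  -- Fubini
  have fub1 : ∫ p in T, H1 p =
      ∫ θ in Ioo (-Real.pi) Real.pi, ∫ r in Ioi (0:ℝ), H1 (r, θ) := by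
    rw [hTdef, Measure.volume_eq_prod, ← Measure.prod_restrict]
    apply integral_prod_symm
    rw [Measure.prod_restrict]
    rw [hTdef, Measure.volume_eq_prod] at hintH1
    exact hintH1
  have fub2 : ∫ p in T, H2 p =
      ∫ r in Ioi (0:ℝ), ∫ θ in Ioo (-Real.pi) Real.pi, H2 (r, θ) := by
    rw [hTdef, Measure.volume_eq_prod, ← Measure.prod_restrict]
    apply integral_prod
    rw [Measure.prod_restrict]
    rw [hTdef, Measure.volume_eq_prod] at hintH2
    exact hintH2
  have hH2zero : ∫ p in T, H2 p = 0 := by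
    rw [fub2]
    rw [setIntegral_congr_fun measurableSet_Ioi (fun r hr => angular r hr)]
    simp
  have split : ∫ p in T, W p = (∫ p in T, H1 p) + (∫ p in T, H2 p) := by
    have : ∀ p : ℝ × ℝ, W p = H1 p + H2 p := by intro p; simp [hH2def]
    rw [integral_congr_ae (Filter.Eventually.of_forall (fun p => this p))]
    exact integral_add hintH1 hintH2
  -- assembling
  have periodic_part : ∀ c : ℝ, 0 < c → c ≤ R' →
      ∫ θ in Ioo (-Real.pi) Real.pi, f ((c:ℂ) * E θ) =
        ∫ θ in (0:ℝ)..(2*Real.pi), f ((c:ℂ) * E θ) := by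
    intro c hc0 hcR'
    have hper : Function.Periodic (fun θ : ℝ => f ((c:ℂ) * E θ)) (2*Real.pi) := by
      intro θ
      simp only [hEdef]
      congr 2
      push_cast
      rw [add_mul, Complex.exp_add, Complex.exp_two_pi_mul_I, mul_one]
    rw [← integral_Ioc_eq_integral_Ioo,
      ← intervalIntegral.integral_of_le (by linarith [Real.pi_pos] : -Real.pi ≤ Real.pi)]
    have h := hper.intervalIntegral_add_eq (-Real.pi) 0
    rw [show -Real.pi + 2*Real.pi = Real.pi by ring, zero_add] at h
    exact h
  have hcontc : ∀ c : ℝ, |c| ≤ R' → Continuous (fun θ : ℝ => f ((c:ℂ) * E θ)) := by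
    intro c hc
    exact hf.continuousOn.comp_continuous (continuous_const.mul hEcont)
      (fun θ => hZU (c, θ) hc)
  have hioo : ∀ c : ℝ, |c| ≤ R' →
      IntegrableOn (fun θ : ℝ => f ((c:ℂ) * E θ)) (Ioo (-Real.pi) Real.pi) :=
    fun c hc => ((hcontc c hc).integrableOn_Icc).mono_set Ioo_subset_Icc_self
  have hRabs : |R| ≤ R' := by rw [abs_of_pos hR]; exact hRR'.le
  have hR'abs : |R'| ≤ R' := by rw [abs_of_pos hR'0]
  have final : ∫ θ in Ioo (-Real.pi) Real.pi, A * (f ((R':ℂ) * E θ) - f ((R:ℂ) * E θ)) =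
      A * ((∫ θ in (0:ℝ)..(2*Real.pi), f ((R':ℂ) * E θ)) -
        ∫ θ in (0:ℝ)..(2*Real.pi), f ((R:ℂ) * E θ)) := by
    rw [integral_const_mul]
    congr 1
    rw [integral_sub (hioo R' hR'abs) (hioo R hRabs)]
    rw [periodic_part R' hR'0 le_rfl, periodic_part R hR hRR'.le]
  rw [step1, step2, split, hH2zero, add_zero, fub1]
  rw [setIntegral_congr_fun measurableSet_Ioo (fun θ _ => radial θ)]
  exact final
end

section
/- Let 0 < R < R' < 1, A = 1/log(R'/R), and let φ_{R,R'} : ℂ → ℝ equal 1 on {|z| ≤ R}, equal A·log(R'/|z|) on {R ≤ |z| ≤ R'}, and equal 0 on {|z| ≥ R'}. Then for every C² function f : ℂ → ℝ on a neighborhood of the closed disk {|z| ≤ R'} and every constant C ≥ 0 with |f(z)| ≤ C for all |z| ≤ R', one has | ∫_𝔻 φ_{R,R'}(z) Δf(z) dLeb(z) | ≤ 4π A C. -/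
open Complex Metric Set MeasureTheory

/-- FTC-2 allowing finitely many exceptional points. -/
lemma ftc_finset (s : Finset ℝ) :
    ∀ (g g' : ℝ → ℝ) (a b : ℝ), a ≤ b →
    ContinuousOn g (Icc a b) →
    (∀ x ∈ Ioo a b, x ∉ s → HasDerivAt g (g' x) x) →
    IntervalIntegrable g' volume a b →
    ∫ y in a..b, g' y = g b - g a := by
  classical
  induction s using Finset.induction_on with
  | empty =>
    intro g g' a b hab hc hd hi
    exact intervalIntegral.integral_eq_sub_of_hasDerivAt_of_le hab hc
      (fun x hx => hd x hx (by simp)) hi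
  | insert c t hct ih =>
    intro g g' a b hab hc hd hi
    by_cases hcmem : c ∈ Ioo a b
    · have hi1 : IntervalIntegrable g' volume a c := by
        apply hi.mono_set
        rw [uIcc_of_le hcmem.1.le, uIcc_of_le hab]
        exact Icc_subset_Icc le_rfl hcmem.2.le
      have hi2 : IntervalIntegrable g' volume c b := by
        apply hi.mono_set
        rw [uIcc_of_le hcmem.2.le, uIcc_of_le hab]
        exact Icc_subset_Icc hcmem.1.le le_rfl
      have h1 : ∫ y in a..c, g' y = g c - g a := by
        refine ih g g' a c hcmem.1.le (hc.mono (Icc_subset_Icc le_rfl hcmem.2.le))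
          (fun x hx hxt => hd x ⟨hx.1, hx.2.trans hcmem.2⟩ ?_) hi1
        simp only [Finset.mem_insert, not_or]
        exact ⟨ne_of_lt hx.2, hxt⟩
      have h2 : ∫ y in c..b, g' y = g b - g c := by
        refine ih g g' c b hcmem.2.le (hc.mono (Icc_subset_Icc hcmem.1.le le_rfl))
          (fun x hx hxt => hd x ⟨hcmem.1.trans hx.1, hx.2⟩ ?_) hi2
        simp only [Finset.mem_insert, not_or]
        exact ⟨ne_of_gt hx.1, hxt⟩
      rw [← intervalIntegral.integral_add_adjacent_intervals hi1 hi2, h1, h2]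
      ring
    · refine ih g g' a b hab hc (fun x hx hxt => hd x hx ?_) hi
      simp only [Finset.mem_insert, not_or]
      exact ⟨fun h => hcmem (h ▸ hx), hxt⟩

/-- A measurable function bounded on a finite-measure set and vanishing outside is integrable. -/
lemma integrable_of_bound_of_support {α : Type*} [MeasureSpace α] {F : α → ℝ} {s : Set α}
    (hm : AEStronglyMeasurable F volume) (hs : MeasurableSet s) (hμ : volume s < ⊤)
    {M : ℝ} (hb : ∀ x ∈ s, |F x| ≤ M) (h0 : ∀ x ∉ s, F x = 0) : Integrable F volume := by
  refine Integrable.mono' ((integrable_indicator_iff hs).2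
    (integrableOn_const (C := M) hμ.ne)) hm (Filter.Eventually.of_forall fun x => ?_)
  by_cases hx : x ∈ s
  · simpa [Set.indicator_of_mem hx, Real.norm_eq_abs] using hb x hx
  · simp [Set.indicator_of_notMem hx, h0 x hx]

lemma intervalIntegrable_of_bound {F : ℝ → ℝ} (hm : Measurable F) (M a b : ℝ)
    (hb : ∀ x, |F x| ≤ M) : IntervalIntegrable F volume a b := by
  rw [intervalIntegrable_iff]
  refine Integrable.mono' (integrableOn_const (C := M) measure_Ioc_lt_top.ne)
    hm.aestronglyMeasurable.restrict (ae_of_all _ fun x => by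
      simpa [Real.norm_eq_abs] using hb x)

section Phi

variable {R R' : ℝ}

lemma log_RR_pos (hR : 0 < R) (hRR' : R < R') : 0 < Real.log (R' / R) :=
  Real.log_pos ((one_lt_div hR).2 hRR')

lemma phi_one (z : ℂ) (h : ‖z‖ ≤ R) : phiRR R R' z = 1 := if_pos h

lemma phi_mid (z : ℂ) (h1 : R < ‖z‖) (h2 : ‖z‖ ≤ R') :
    phiRR R R' z = (1 / Real.log (R' / R)) * Real.log (R' / ‖z‖) := by
  rw [phiRR, if_neg (not_le.2 h1), if_pos h2]

lemma phi_zero (hR : 0 < R) (hRR' : R < R') (z : ℂ) (h : R' ≤ ‖z‖) :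
    phiRR R R' z = 0 := by
  have h1 : ¬ ‖z‖ ≤ R := by linarith
  rw [phiRR, if_neg h1]
  by_cases h2 : ‖z‖ ≤ R'
  · have hz : ‖z‖ = R' := le_antisymm h2 h
    rw [if_pos h2, hz, div_self (by linarith), Real.log_one, mul_zero]
  · rw [if_neg h2]

lemma phi_nonneg (hR : 0 < R) (hRR' : R < R') (z : ℂ) : 0 ≤ phiRR R R' z := by
  rw [phiRR]
  split_ifs with h1 h2
  · norm_num
  · push_neg at h1
    have : (1:ℝ) ≤ R' / ‖z‖ := (one_le_div (hR.trans h1)).2 h2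
    exact mul_nonneg (one_div_nonneg.2 (log_RR_pos hR hRR').le) (Real.log_nonneg this)
  · exact le_rfl
    
lemma phi_le_one (hR : 0 < R) (hRR' : R < R') (z : ℂ) : phiRR R R' z ≤ 1 := by
  rw [phiRR]
  split_ifs with h1 h2
  · exact le_rfl
  · push_neg at h1
    have hL := log_RR_pos hR hRR'
    rw [← mul_le_mul_iff_right₀ hL, mul_one, ← mul_assoc, mul_one_div, div_self hL.ne', one_mul]
    apply Real.log_le_log (div_pos (by linarith) (hR.trans h1))
    apply div_le_div_of_nonneg_left (by linarith) hR h1.le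
  · norm_num

lemma phi_continuous (hR : 0 < R) (hRR' : R < R') : Continuous (phiRR R R') := by
  have hR'0 : 0 < R' := hR.trans hRR'
  have hL := log_RR_pos hR hRR'
  rw [continuous_iff_continuousAt]
  intro z
  by_cases hz : ‖z‖ < R
  · have ho : IsOpen {w : ℂ | ‖w‖ < R} := isOpen_lt continuous_norm continuous_const
    have hev : ∀ᶠ w in nhds z, phiRR R R' w = 1 := by
      filter_upwards [ho.mem_nhds hz] with w hw using phi_one w hw.le
    exact continuousAt_const.congr (by filter_upwards [hev] with w hw using hw.symm)
  · push_neg at hz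
    have hz0 : z ≠ 0 := by
      intro h; rw [h] at hz; simp at hz; linarith
    have key : ∀ w : ℂ, w ≠ 0 → phiRR R R' w =
        (1 / Real.log (R' / R)) *
          min (max (Real.log (R' / ‖w‖)) 0) (Real.log (R' / R)) := by
      intro w hw
      have hw0 : 0 < ‖w‖ := by simpa [norm_pos_iff] using hw
      rcases le_or_gt (‖w‖) R with h1 | h1
      · rw [phi_one w h1]
        have hlog : Real.log (R' / R) ≤ Real.log (R' / ‖w‖) :=
          Real.log_le_log (by positivity) (div_le_div_of_nonneg_left (by linarith) hw0 h1)
        rw [max_eq_left (le_trans hL.le hlog), min_eq_right hlog, one_div_mul_cancel hL.ne']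
      rcases le_or_gt (‖w‖) R' with h2 | h2
      · rw [phi_mid w h1 h2]
        have hpos : 0 ≤ Real.log (R' / ‖w‖) :=
          Real.log_nonneg ((one_le_div hw0).2 h2)
        have hle : Real.log (R' / ‖w‖) ≤ Real.log (R' / R) :=
          Real.log_le_log (by positivity) (div_le_div_of_nonneg_left (by linarith) hR h1.le)
        rw [max_eq_left hpos, min_eq_left hle]
      · rw [phi_zero hR hRR' w h2.le]
        have hneg : Real.log (R' / ‖w‖) ≤ 0 :=
          Real.log_nonpos (by positivity) ((div_le_one hw0).2 h2.le)
        rw [max_eq_right hneg, min_eq_left hL.le, mul_zero]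
    have hco : ContinuousAt (fun w : ℂ =>
        (1 / Real.log (R' / R)) *
          min (max (Real.log (R' / ‖w‖)) 0) (Real.log (R' / R))) z := by
      have habs : ContinuousAt (fun w : ℂ => ‖w‖) z := continuous_norm.continuousAt
      have hzpos : 0 < ‖z‖ := by simpa [norm_pos_iff] using hz0
      have hdiv : ContinuousAt (fun w : ℂ => R' / ‖w‖) z :=
        continuousAt_const.div habs hzpos.ne'
      have hlog : ContinuousAt (fun w : ℂ => Real.log (R' / ‖w‖)) z :=
        (Real.continuousAt_log (by positivity)).comp hdiv
      exact continuousAt_const.mul ((hlog.max continuousAt_const).min continuousAt_const)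
    apply hco.congr
    have ho : IsOpen {w : ℂ | w ≠ 0} := isOpen_ne
    filter_upwards [ho.mem_nhds hz0] with w hw using (key w hw).symm

end Phi

section PhiDeriv

variable {R R' : ℝ}

lemma phi_formula_log (hR : 0 < R) (hRR' : R < R') (w : ℂ) (h1 : R < ‖w‖)
    (h2 : ‖w‖ ≤ R') :
    phiRR R R' w = (1 / Real.log (R' / R)) *
      (Real.log R' - Real.log (w.re ^ 2 + w.im ^ 2) / 2) := by
  have hw0 : 0 < ‖w‖ := hR.trans h1
  rw [phi_mid w h1 h2]
  congr 1
  rw [Real.log_div (by linarith) hw0.ne']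
  congr 1
  have : ‖w‖ = Real.sqrt (w.re ^ 2 + w.im ^ 2) := by
    rw [Complex.norm_def, Complex.normSq_apply]; ring_nf
  rw [this, Real.log_sqrt (by positivity)]

lemma sq_add_sq_pos_of_abs {w : ℂ} {R : ℝ} (hR : 0 < R) (h : R < ‖w‖) :
    0 < w.re ^ 2 + w.im ^ 2 := by
  have hw : w ≠ 0 := by
    intro h0; rw [h0] at h; simp at h; linarith
  have := Complex.normSq_pos.2 hw
  rw [Complex.normSq_apply] at this
  nlinarith

lemma phi_hasDerivAt_x (hR : 0 < R) (hRR' : R < R') (x y : ℝ)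
    (h1 : R < ‖x + y * I‖) (h2 : ‖x + y * I‖ < R') :
    HasDerivAt (fun t : ℝ => phiRR R R' (t + y * I))
      (-(1 / Real.log (R' / R)) * x / (x ^ 2 + y ^ 2)) x := by
  have hre : (((x:ℂ) + y * I)).re = x := by simp
  have him : (((x:ℂ) + y * I)).im = y := by simp
  have hq : (0:ℝ) < x ^ 2 + y ^ 2 := by
    have := sq_add_sq_pos_of_abs hR h1; rwa [hre, him] at this
  have hF : HasDerivAt (fun t : ℝ => (1 / Real.log (R' / R)) *
      (Real.log R' - Real.log (t ^ 2 + y ^ 2) / 2))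
      (-(1 / Real.log (R' / R)) * x / (x ^ 2 + y ^ 2)) x := by
    have h0 : HasDerivAt (fun t : ℝ => t ^ 2 + y ^ 2) (2 * x) x := by
      simpa using (hasDerivAt_pow 2 x).add_const (y ^ 2)
    have hlog : HasDerivAt (fun t : ℝ => Real.log (t ^ 2 + y ^ 2))
        ((x ^ 2 + y ^ 2)⁻¹ * (2 * x)) x := by have := (Real.hasDerivAt_log hq.ne').comp x h0; exact this
    have := ((hlog.div_const 2).const_sub (Real.log R')).const_mul (1 / Real.log (R' / R))
    refine this.congr_deriv ?_
    ring
  apply hF.congr_of_eventuallyEq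
  have ho : IsOpen {w : ℂ | R < ‖w‖ ∧ ‖w‖ < R'} :=
    (isOpen_lt continuous_const continuous_norm).inter
      (isOpen_lt continuous_norm continuous_const)
  have hline : Continuous fun t : ℝ => (t : ℂ) + y * I := by continuity
  filter_upwards [hline.continuousAt.preimage_mem_nhds (ho.mem_nhds ⟨h1, h2⟩)] with t ht
  rw [phi_formula_log hR hRR' _ ht.1 ht.2.le]
  simp

lemma phi_hasDerivAt_y (hR : 0 < R) (hRR' : R < R') (x y : ℝ)
    (h1 : R < ‖x + y * I‖) (h2 : ‖x + y * I‖ < R') :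
    HasDerivAt (fun t : ℝ => phiRR R R' (x + t * I))
      (-(1 / Real.log (R' / R)) * y / (x ^ 2 + y ^ 2)) y := by
  have hre : (((x:ℂ) + y * I)).re = x := by simp
  have him : (((x:ℂ) + y * I)).im = y := by simp
  have hq : (0:ℝ) < x ^ 2 + y ^ 2 := by
    have := sq_add_sq_pos_of_abs hR h1; rwa [hre, him] at this
  have hF : HasDerivAt (fun t : ℝ => (1 / Real.log (R' / R)) *
      (Real.log R' - Real.log (x ^ 2 + t ^ 2) / 2))
      (-(1 / Real.log (R' / R)) * y / (x ^ 2 + y ^ 2)) y := by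
    have h0 : HasDerivAt (fun t : ℝ => x ^ 2 + t ^ 2) (2 * y) y := by
      simpa using (hasDerivAt_pow 2 y).const_add (x ^ 2)
    have hlog : HasDerivAt (fun t : ℝ => Real.log (x ^ 2 + t ^ 2))
        ((x ^ 2 + y ^ 2)⁻¹ * (2 * y)) y := by have := (Real.hasDerivAt_log hq.ne').comp y h0; exact this
    have := ((hlog.div_const 2).const_sub (Real.log R')).const_mul (1 / Real.log (R' / R))
    refine this.congr_deriv ?_
    ring
  apply hF.congr_of_eventuallyEq
  have ho : IsOpen {w : ℂ | R < ‖w‖ ∧ ‖w‖ < R'} :=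
    (isOpen_lt continuous_const continuous_norm).inter
      (isOpen_lt continuous_norm continuous_const)
  have hline : Continuous fun t : ℝ => (x : ℂ) + t * I := by continuity
  filter_upwards [hline.continuousAt.preimage_mem_nhds (ho.mem_nhds ⟨h1, h2⟩)] with t ht
  rw [phi_formula_log hR hRR' _ ht.1 ht.2.le]
  simp

end PhiDeriv

section Reg

lemma contDiffOn_fderiv_apply (f : ℂ → ℝ) (U : Set ℂ) (hU : IsOpen U)
    (hf : ContDiffOn ℝ 2 f U) (v : ℂ) :
    ContDiffOn ℝ 1 (fun w => fderiv ℝ f w v) U := by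
  have h : ContDiffOn ℝ 1 (fderiv ℝ f) U := hf.fderiv_of_isOpen hU (by norm_num)
  exact (ContinuousLinearMap.apply ℝ ℝ v).contDiff.comp_contDiffOn h

lemma continuousOn_fderiv_apply (g : ℂ → ℝ) (U : Set ℂ) (hU : IsOpen U)
    (hg : ContDiffOn ℝ 1 g U) (v : ℂ) :
    ContinuousOn (fun z => fderiv ℝ g z v) U :=
  (ContinuousLinearMap.apply ℝ ℝ v).continuous.comp_continuousOn
    (hg.continuousOn_fderiv_of_isOpen hU le_rfl)

lemma hasDerivAt_line_x (x y : ℝ) : HasDerivAt (fun t : ℝ => (t : ℂ) + y * I) 1 x := by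
  simpa using (Complex.ofRealCLM.hasDerivAt (x := x)).add_const ((y : ℂ) * I)

lemma hasDerivAt_line_y (x y : ℝ) : HasDerivAt (fun t : ℝ => (x : ℂ) + t * I) I y := by
  have h : HasDerivAt (fun t : ℝ => (t : ℂ)) 1 y := Complex.ofRealCLM.hasDerivAt (x := y)
  simpa using (h.mul_const I).const_add (x : ℂ)

lemma hasDerivAt_ray (r θ : ℝ) :
    HasDerivAt (fun t : ℝ => (t : ℂ) * (Real.cos θ + Real.sin θ * I))
      (Real.cos θ + Real.sin θ * I) r := by
  have h : HasDerivAt (fun t : ℝ => (t : ℂ)) 1 r := Complex.ofRealCLM.hasDerivAt (x := r)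
  simpa using h.mul_const (Real.cos θ + Real.sin θ * I)

end Reg
section IBP

variable {R R' : ℝ}

lemma ibp_x (hR : 0 < R) (hRR' : R < R') (hR' : R' < 1)
    (f : ℂ → ℝ) (U : Set ℂ) (hU : IsOpen U) (hUsub : Metric.closedBall (0 : ℂ) R' ⊆ U)
    (hf : ContDiffOn ℝ 2 f U) :
    ∫ z : ℂ, ((if R < ‖z‖ ∧ ‖z‖ < R' then
        -(1 / Real.log (R' / R)) * z.re / (z.re ^ 2 + z.im ^ 2) else 0) * fderiv ℝ f z 1
      + phiRR R R' z * fderiv ℝ (fun w => fderiv ℝ f w 1) z 1) = 0 := by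
  classical
  have hR'0 : 0 < R' := hR.trans hRR'
  have hL : 0 < Real.log (R' / R) := log_RR_pos hR hRR'
  set A : ℝ := 1 / Real.log (R' / R) with hA
  have hA0 : 0 < A := by positivity
  set g1 : ℂ → ℝ := fun w => fderiv ℝ f w 1 with hg1def
  set h1 : ℂ → ℝ := fun z => fderiv ℝ g1 z 1 with hh1def
  set φ : ℂ → ℝ := phiRR R R' with hφdef
  set ψ1 : ℂ → ℝ := fun z => if R < ‖z‖ ∧ ‖z‖ < R' then
      -A * z.re / (z.re ^ 2 + z.im ^ 2) else 0 with hψ1def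
  set K : Set ℂ := Metric.closedBall (0 : ℂ) R' with hKdef
  set V : ℂ → ℝ := fun z => ψ1 z * g1 z + φ z * h1 z with hVdef
  show ∫ z : ℂ, V z = 0
  -- regularity
  have hg1c : ContDiffOn ℝ 1 g1 U := contDiffOn_fderiv_apply f U hU hf 1
  have hg1cont : ContinuousOn g1 U := hg1c.continuousOn
  have hg1d : ∀ z ∈ U, DifferentiableAt ℝ g1 z := fun z hz =>
    (hg1c.differentiableOn one_ne_zero).differentiableAt (hU.mem_nhds hz)
  have hh1cont : ContinuousOn h1 U := continuousOn_fderiv_apply g1 U hU hg1c 1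
  have mg1 : Measurable g1 := measurable_fderiv_apply_const ℝ f 1
  have mh1 : Measurable h1 := measurable_fderiv_apply_const ℝ g1 1
  have mφ : Measurable φ := (phi_continuous hR hRR').measurable
  have mset : MeasurableSet {z : ℂ | R < ‖z‖ ∧ ‖z‖ < R'} :=
    (measurableSet_lt measurable_const continuous_norm.measurable).inter
      (measurableSet_lt continuous_norm.measurable measurable_const)
  have mψ1 : Measurable ψ1 := Measurable.ite mset
    ((measurable_const.mul Complex.measurable_re).div
      ((Complex.measurable_re.pow_const 2).add (Complex.measurable_im.pow_const 2)))
    measurable_const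
  have mV : Measurable V := (mψ1.mul mg1).add (mφ.mul mh1)
  -- bounds
  have hKc : IsCompact K := isCompact_closedBall _ _
  have hmemK : ∀ z : ℂ, z ∈ K ↔ ‖z‖ ≤ R' := fun z => by
    rw [hKdef, Metric.mem_closedBall, Complex.dist_eq, sub_zero]
  obtain ⟨B1, hB1⟩ := hKc.exists_bound_of_continuousOn (hg1cont.mono hUsub)
  obtain ⟨B3, hB3⟩ := hKc.exists_bound_of_continuousOn (hh1cont.mono hUsub)
  set B : ℝ := max 0 (max B1 B3) with hBdef
  have hB0 : 0 ≤ B := le_max_left _ _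
  have hBg1 : ∀ z ∈ K, |g1 z| ≤ B := fun z hz => le_trans (by simpa using hB1 z hz)
    (le_trans (le_max_left _ _) (le_max_right _ _))
  have hBh1 : ∀ z ∈ K, |h1 z| ≤ B := fun z hz => le_trans (by simpa using hB3 z hz)
    (le_trans (le_max_right _ _) (le_max_right _ _))
  have hψ0 : ∀ z : ℂ, ¬(R < ‖z‖ ∧ ‖z‖ < R') → ψ1 z = 0 :=
    fun z h => if_neg h
  have hψb : ∀ z : ℂ, |ψ1 z| ≤ A / R := by
    intro z
    rw [hψ1def]
    dsimp only
    split_ifs with h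
    · obtain ⟨ha, hb⟩ := h
      have hr0 : 0 < ‖z‖ := hR.trans ha
      have hsq : z.re ^ 2 + z.im ^ 2 = ‖z‖ ^ 2 := by
        rw [Complex.sq_norm, Complex.normSq_apply]; ring
      have habs : |-(A * z.re) / ‖z‖ ^ 2| = A * |z.re| / ‖z‖ ^ 2 := by
        rw [abs_div, abs_neg, abs_mul, _root_.abs_of_pos hA0,
          _root_.abs_of_pos (pow_pos hr0 2)]
      rw [hsq, neg_mul] at *
      rw [habs]
      have hre : |z.re| ≤ ‖z‖ := Complex.abs_re_le_norm z
      calc A * |z.re| / ‖z‖ ^ 2 ≤ A * ‖z‖ / ‖z‖ ^ 2 := by gcongr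
        _ = A / ‖z‖ := by field_simp [hr0.ne']
        _ ≤ A / R := div_le_div_of_nonneg_left hA0.le hR ha.le
    · simp; positivity
  set M : ℝ := A / R * B + B with hMdef
  have hVsupp : ∀ z : ℂ, z ∉ K → V z = 0 := by
    intro z hz
    have hgt : R' < ‖z‖ := by
      by_contra h; push_neg at h; exact hz ((hmemK z).2 h)
    rw [hVdef]; dsimp only
    rw [hψ0 z (by push_neg; intro _; linarith), hφdef, phi_zero hR hRR' z hgt.le]
    ring
  have hVb : ∀ z : ℂ, |V z| ≤ M := by
    intro z
    by_cases hz : z ∈ K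
    · calc |V z| ≤ |ψ1 z * g1 z| + |φ z * h1 z| := abs_add_le _ _
        _ ≤ (A / R) * B + 1 * B := by
            rw [abs_mul, abs_mul]
            gcongr
            · exact hψb z
            · exact hBg1 z hz
            · rw [hφdef, _root_.abs_of_nonneg (phi_nonneg hR hRR' z)]
              exact phi_le_one hR hRR' z
            · exact hBh1 z hz
        _ = M := by rw [hMdef]; ring
    · rw [hVsupp z hz]
      simp only [abs_zero]
      rw [hMdef]; positivity
  have hVint : Integrable V volume := integrable_of_bound_of_support
    mV.aestronglyMeasurable measurableSet_closedBall measure_closedBall_lt_top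
    (fun z _ => hVb z) hVsupp
  -- transfer to ℝ × ℝ
  have hsymm : ∀ p : ℝ × ℝ, Complex.measurableEquivRealProd.symm p = (p.1 : ℂ) + p.2 * I := by
    intro p
    rw [Complex.measurableEquivRealProd_symm_apply, Complex.mk_eq_add_mul_I]
  have hmp : MeasurePreserving (⇑Complex.measurableEquivRealProd.symm)
      (volume : Measure (ℝ × ℝ)) (volume : Measure ℂ) :=
    Complex.volume_preserving_equiv_real_prod.symm
  have hstep1 : ∫ z : ℂ, V z = ∫ p : ℝ × ℝ, V ((p.1 : ℂ) + p.2 * I) := by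
    rw [← hmp.integral_comp Complex.measurableEquivRealProd.symm.measurableEmbedding V]
    simp only [hsymm]
  have hGint : Integrable (fun p : ℝ × ℝ => V ((p.1 : ℂ) + p.2 * I)) volume := by
    have h := (hmp.integrable_comp_emb
      Complex.measurableEquivRealProd.symm.measurableEmbedding).2 hVint
    exact h.congr (Filter.Eventually.of_forall fun p => by
      simp only [Function.comp_apply]; rw [hsymm p])
  rw [hstep1]
  rw [MeasureTheory.Measure.volume_eq_prod ℝ ℝ] at hGint ⊢
  rw [MeasureTheory.integral_prod_symm _ hGint]
  -- inner integral vanishes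
  have hinner : ∀ y : ℝ, (∫ x : ℝ, V ((x : ℂ) + y * I)) = 0 := by
    intro y
    set P : ℝ → ℝ := fun x => φ ((x : ℂ) + y * I) * g1 ((x : ℂ) + y * I) with hPdef
    set F : ℝ → ℝ := fun x => V ((x : ℂ) + y * I) with hFdef
    have habs_ge : ∀ x : ℝ, |x| ≤ ‖(x : ℂ) + y * I‖ := fun x => by
      simpa using Complex.abs_re_le_norm ((x : ℂ) + y * I)
    have hout : ∀ x : ℝ, (1 : ℝ) ≤ |x| → ((x : ℂ) + y * I) ∉ K := by
      intro x hx hmem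
      rw [hmemK] at hmem
      have := habs_ge x
      linarith
    have hzero : ∀ x : ℝ, x ∉ Ioc (-1 : ℝ) 1 → F x = 0 := by
      intro x hx
      apply hVsupp
      apply hout
      simp only [mem_Ioc, not_and_or, not_lt, not_le] at hx
      rcases hx with h | h
      · linarith [neg_abs_le x]
      · linarith [le_abs_self x]
    rw [← setIntegral_eq_integral_of_forall_compl_eq_zero hzero]
    rw [← intervalIntegral.integral_of_le (by norm_num : (-1 : ℝ) ≤ 1)]
    have hlc : Continuous fun t : ℝ => (t : ℂ) + y * I :=
      Complex.continuous_ofReal.add continuous_const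
    have hP1 : P 1 = 0 := by
      rw [hPdef]; dsimp only
      rw [hφdef, phi_zero hR hRR' _ (le_trans hR'.le (by simpa using habs_ge 1)), zero_mul]
    have hPm1 : P (-1) = 0 := by
      rw [hPdef]; dsimp only
      rw [hφdef, phi_zero hR hRR' _ (le_trans hR'.le (by simpa using habs_ge (-1))), zero_mul]
    have hPcont : Continuous P := by
      rw [continuous_iff_continuousAt]
      intro x
      by_cases hzU : ((x : ℂ) + y * I) ∈ U
      · have c1 : ContinuousAt (phiRR R R') ((x : ℂ) + y * I) :=
          (phi_continuous hR hRR').continuousAt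
        have c2 : ContinuousAt g1 ((x : ℂ) + y * I) := hg1cont.continuousAt (hU.mem_nhds hzU)
        exact ContinuousAt.mul
          (ContinuousAt.comp (f := fun t : ℝ => (t : ℂ) + y * I) (x := x) c1 hlc.continuousAt)
          (ContinuousAt.comp (f := fun t : ℝ => (t : ℂ) + y * I) (x := x) c2 hlc.continuousAt)
      · have hgt : R' < ‖(x : ℂ) + y * I‖ := by
          by_contra h; push_neg at h; exact hzU (hUsub ((hmemK _).2 h))
        have ho : IsOpen {w : ℂ | R' < ‖w‖} :=
          isOpen_lt continuous_const continuous_norm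
        have hev : P =ᶠ[nhds x] fun _ => (0 : ℝ) := by
          filter_upwards [hlc.continuousAt.preimage_mem_nhds (ho.mem_nhds hgt)] with t ht
          rw [hPdef]; dsimp only
          rw [hφdef, phi_zero hR hRR' _ (le_of_lt ht), zero_mul]
        exact (continuousAt_congr hev).2 continuousAt_const
    have hFint : IntervalIntegrable F volume (-1) 1 :=
      intervalIntegrable_of_bound (mV.comp hlc.measurable) M (-1) 1 (fun x => hVb _)
    set s : Finset ℝ := {Real.sqrt (R ^ 2 - y ^ 2), -Real.sqrt (R ^ 2 - y ^ 2),
      Real.sqrt (R' ^ 2 - y ^ 2), -Real.sqrt (R' ^ 2 - y ^ 2)} with hsdef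
    have hderiv : ∀ x ∈ Ioo (-1 : ℝ) 1, x ∉ s → HasDerivAt P (F x) x := by
      intro x hx hxs
      have hzre : ((x : ℂ) + y * I).re = x := by simp
      have hzim : ((x : ℂ) + y * I).im = y := by simp
      have habs2 : ‖(x : ℂ) + y * I‖ ^ 2 = x ^ 2 + y ^ 2 := by
        rw [Complex.sq_norm, Complex.normSq_apply, hzre, hzim]; ring
      have hnotmem : ∀ c : ℝ, 0 < c → ‖(x : ℂ) + y * I‖ = c →
          |x| = Real.sqrt (c ^ 2 - y ^ 2) := by
        intro c hc habs
        rw [← Real.sqrt_sq_eq_abs]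
        congr 1
        have : x ^ 2 + y ^ 2 = c ^ 2 := by rw [← habs2, habs]
        linarith
      have hrR : ‖(x : ℂ) + y * I‖ ≠ R := by
        intro h
        have h' := hnotmem R hR h
        rcases (abs_eq (Real.sqrt_nonneg _)).1 h' with h'' | h''
        · exact hxs (by rw [hsdef]; simp [h''])
        · exact hxs (by rw [hsdef]; simp [h''])
      have hrR' : ‖(x : ℂ) + y * I‖ ≠ R' := by
        intro h
        have h' := hnotmem R' hR'0 h
        rcases (abs_eq (Real.sqrt_nonneg _)).1 h' with h'' | h''
        · exact hxs (by rw [hsdef]; simp [h''])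
        · exact hxs (by rw [hsdef]; simp [h''])
      rcases lt_trichotomy (‖(x : ℂ) + y * I‖) R with hlt | heq | hgt
      · -- |z| < R : φ = 1 near z
        have hzU : ((x : ℂ) + y * I) ∈ U := hUsub ((hmemK _).2 (by linarith))
        have hg1line : HasDerivAt (fun t : ℝ => g1 ((t : ℂ) + y * I))
            (h1 ((x : ℂ) + y * I)) x := by
          have := (hg1d _ hzU).hasFDerivAt.comp_hasDerivAt x (hasDerivAt_line_x x y)
          exact this
        have hFx : F x = h1 ((x : ℂ) + y * I) := by
          rw [hFdef]; dsimp only; rw [hVdef]; dsimp only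
          rw [hψ0 _ (by push_neg; intro h'; linarith), hφdef, phi_one _ (le_of_lt hlt)]
          ring
        rw [hFx]
        refine hg1line.congr_of_eventuallyEq ?_
        have ho : IsOpen {w : ℂ | ‖w‖ < R} :=
          isOpen_lt continuous_norm continuous_const
        filter_upwards [hlc.continuousAt.preimage_mem_nhds (ho.mem_nhds hlt)] with t ht
        rw [hPdef]; dsimp only
        rw [hφdef, phi_one _ (le_of_lt ht), one_mul]
      · exact absurd heq hrR
      rcases lt_trichotomy (‖(x : ℂ) + y * I‖) R' with hlt' | heq' | hgt'
      · -- middle region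
        have hzU : ((x : ℂ) + y * I) ∈ U := hUsub ((hmemK _).2 hlt'.le)
        have hg1line : HasDerivAt (fun t : ℝ => g1 ((t : ℂ) + y * I))
            (h1 ((x : ℂ) + y * I)) x := by
          have := (hg1d _ hzU).hasFDerivAt.comp_hasDerivAt x (hasDerivAt_line_x x y)
          exact this
        have hφline := phi_hasDerivAt_x hR hRR' x y hgt hlt'
        have hprod := hφline.mul hg1line
        have hFx : F x = -(1 / Real.log (R' / R)) * x / (x ^ 2 + y ^ 2) *
            g1 ((x : ℂ) + y * I) + phiRR R R' ((x : ℂ) + y * I) * h1 ((x : ℂ) + y * I) := by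
          rw [hFdef]; dsimp only; rw [hVdef]; dsimp only
          rw [hψ1def]; dsimp only
          rw [if_pos ⟨hgt, hlt'⟩, hzre, hzim, hφdef, hA]
        rw [hFx]
        refine hprod.congr_deriv ?_; ring
      · exact absurd heq' hrR'
      · -- outside
        have hFx : F x = 0 := by
          rw [hFdef]; dsimp only; rw [hVdef]; dsimp only
          rw [hψ0 _ (by push_neg; intro _; linarith), hφdef, phi_zero hR hRR' _ hgt'.le]
          ring
        rw [hFx]
        have ho : IsOpen {w : ℂ | R' < ‖w‖} :=
          isOpen_lt continuous_const continuous_norm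
        refine (hasDerivAt_const x (0 : ℝ)).congr_of_eventuallyEq ?_
        filter_upwards [hlc.continuousAt.preimage_mem_nhds (ho.mem_nhds hgt')] with t ht
        rw [hPdef]; dsimp only
        rw [hφdef, phi_zero hR hRR' _ (le_of_lt ht), zero_mul]
    rw [ftc_finset s P F (-1) 1 (by norm_num) hPcont.continuousOn hderiv hFint, hP1, hPm1,
      sub_zero]
  have : ∀ y : ℝ, (∫ x : ℝ, (fun p : ℝ × ℝ => V ((p.1 : ℂ) + p.2 * I)) (x, y)) = 0 :=
    fun y => hinner y
  simp_rw [this]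
  simp


lemma ibp_y (hR : 0 < R) (hRR' : R < R') (hR' : R' < 1)
    (f : ℂ → ℝ) (U : Set ℂ) (hU : IsOpen U) (hUsub : Metric.closedBall (0 : ℂ) R' ⊆ U)
    (hf : ContDiffOn ℝ 2 f U) :
    ∫ z : ℂ, ((if R < ‖z‖ ∧ ‖z‖ < R' then
        -(1 / Real.log (R' / R)) * z.im / (z.re ^ 2 + z.im ^ 2) else 0) * fderiv ℝ f z I
      + phiRR R R' z * fderiv ℝ (fun w => fderiv ℝ f w I) z I) = 0 := by
  classical
  have hR'0 : 0 < R' := hR.trans hRR'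
  have hL : 0 < Real.log (R' / R) := log_RR_pos hR hRR'
  set A : ℝ := 1 / Real.log (R' / R) with hA
  have hA0 : 0 < A := by positivity
  set g2 : ℂ → ℝ := fun w => fderiv ℝ f w I with hg2def
  set h2 : ℂ → ℝ := fun z => fderiv ℝ g2 z I with hh2def
  set φ : ℂ → ℝ := phiRR R R' with hφdef
  set ψ2 : ℂ → ℝ := fun z => if R < ‖z‖ ∧ ‖z‖ < R' then
      -A * z.im / (z.re ^ 2 + z.im ^ 2) else 0 with hψ2def
  set K : Set ℂ := Metric.closedBall (0 : ℂ) R' with hKdef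
  set V : ℂ → ℝ := fun z => ψ2 z * g2 z + φ z * h2 z with hVdef
  show ∫ z : ℂ, V z = 0
  have hg2c : ContDiffOn ℝ 1 g2 U := contDiffOn_fderiv_apply f U hU hf I
  have hg2cont : ContinuousOn g2 U := hg2c.continuousOn
  have hg2d : ∀ z ∈ U, DifferentiableAt ℝ g2 z := fun z hz =>
    (hg2c.differentiableOn one_ne_zero).differentiableAt (hU.mem_nhds hz)
  have hh2cont : ContinuousOn h2 U := continuousOn_fderiv_apply g2 U hU hg2c I
  have mg2 : Measurable g2 := measurable_fderiv_apply_const ℝ f I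
  have mh2 : Measurable h2 := measurable_fderiv_apply_const ℝ g2 I
  have mφ : Measurable φ := (phi_continuous hR hRR').measurable
  have mset : MeasurableSet {z : ℂ | R < ‖z‖ ∧ ‖z‖ < R'} :=
    (measurableSet_lt measurable_const continuous_norm.measurable).inter
      (measurableSet_lt continuous_norm.measurable measurable_const)
  have mψ2 : Measurable ψ2 := Measurable.ite mset
    ((measurable_const.mul Complex.measurable_im).div
      ((Complex.measurable_re.pow_const 2).add (Complex.measurable_im.pow_const 2)))
    measurable_const
  have mV : Measurable V := (mψ2.mul mg2).add (mφ.mul mh2)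
  have hKc : IsCompact K := isCompact_closedBall _ _
  have hmemK : ∀ z : ℂ, z ∈ K ↔ ‖z‖ ≤ R' := fun z => by
    rw [hKdef, Metric.mem_closedBall, Complex.dist_eq, sub_zero]
  obtain ⟨B1, hB1⟩ := hKc.exists_bound_of_continuousOn (hg2cont.mono hUsub)
  obtain ⟨B3, hB3⟩ := hKc.exists_bound_of_continuousOn (hh2cont.mono hUsub)
  set B : ℝ := max 0 (max B1 B3) with hBdef
  have hB0 : 0 ≤ B := le_max_left _ _
  have hBg2 : ∀ z ∈ K, |g2 z| ≤ B := fun z hz => le_trans (by simpa using hB1 z hz)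
    (le_trans (le_max_left _ _) (le_max_right _ _))
  have hBh2 : ∀ z ∈ K, |h2 z| ≤ B := fun z hz => le_trans (by simpa using hB3 z hz)
    (le_trans (le_max_right _ _) (le_max_right _ _))
  have hψ0 : ∀ z : ℂ, ¬(R < ‖z‖ ∧ ‖z‖ < R') → ψ2 z = 0 :=
    fun z h => if_neg h
  have hψb : ∀ z : ℂ, |ψ2 z| ≤ A / R := by
    intro z
    rw [hψ2def]
    dsimp only
    split_ifs with h
    · obtain ⟨ha, hb⟩ := h
      have hr0 : 0 < ‖z‖ := hR.trans ha
      have hsq : z.re ^ 2 + z.im ^ 2 = ‖z‖ ^ 2 := by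
        rw [Complex.sq_norm, Complex.normSq_apply]; ring
      have habs : |-(A * z.im) / ‖z‖ ^ 2| = A * |z.im| / ‖z‖ ^ 2 := by
        rw [abs_div, abs_neg, abs_mul, _root_.abs_of_pos hA0,
          _root_.abs_of_pos (pow_pos hr0 2)]
      rw [hsq, neg_mul] at *
      rw [habs]
      have hre : |z.im| ≤ ‖z‖ := Complex.abs_im_le_norm z
      calc A * |z.im| / ‖z‖ ^ 2 ≤ A * ‖z‖ / ‖z‖ ^ 2 := by gcongr
        _ = A / ‖z‖ := by field_simp [hr0.ne']
        _ ≤ A / R := div_le_div_of_nonneg_left hA0.le hR ha.le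
    · simp; positivity
  set M : ℝ := A / R * B + B with hMdef
  have hVsupp : ∀ z : ℂ, z ∉ K → V z = 0 := by
    intro z hz
    have hgt : R' < ‖z‖ := by
      by_contra h; push_neg at h; exact hz ((hmemK z).2 h)
    rw [hVdef]; dsimp only
    rw [hψ0 z (by push_neg; intro _; linarith), hφdef, phi_zero hR hRR' z hgt.le]
    ring
  have hVb : ∀ z : ℂ, |V z| ≤ M := by
    intro z
    by_cases hz : z ∈ K
    · calc |V z| ≤ |ψ2 z * g2 z| + |φ z * h2 z| := abs_add_le _ _
        _ ≤ (A / R) * B + 1 * B := by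
            rw [abs_mul, abs_mul]
            gcongr
            · exact hψb z
            · exact hBg2 z hz
            · rw [hφdef, _root_.abs_of_nonneg (phi_nonneg hR hRR' z)]
              exact phi_le_one hR hRR' z
            · exact hBh2 z hz
        _ = M := by rw [hMdef]; ring
    · rw [hVsupp z hz]
      simp only [abs_zero]
      rw [hMdef]; positivity
  have hVint : Integrable V volume := integrable_of_bound_of_support
    mV.aestronglyMeasurable measurableSet_closedBall measure_closedBall_lt_top
    (fun z _ => hVb z) hVsupp
  have hsymm : ∀ p : ℝ × ℝ, Complex.measurableEquivRealProd.symm p = (p.1 : ℂ) + p.2 * I := by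
    intro p
    rw [Complex.measurableEquivRealProd_symm_apply, Complex.mk_eq_add_mul_I]
  have hmp : MeasurePreserving (⇑Complex.measurableEquivRealProd.symm)
      (volume : Measure (ℝ × ℝ)) (volume : Measure ℂ) :=
    Complex.volume_preserving_equiv_real_prod.symm
  have hstep1 : ∫ z : ℂ, V z = ∫ p : ℝ × ℝ, V ((p.1 : ℂ) + p.2 * I) := by
    rw [← hmp.integral_comp Complex.measurableEquivRealProd.symm.measurableEmbedding V]
    simp only [hsymm]
  have hGint : Integrable (fun p : ℝ × ℝ => V ((p.1 : ℂ) + p.2 * I)) volume := by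
    have h := (hmp.integrable_comp_emb
      Complex.measurableEquivRealProd.symm.measurableEmbedding).2 hVint
    exact h.congr (Filter.Eventually.of_forall fun p => by
      simp only [Function.comp_apply]; rw [hsymm p])
  rw [hstep1]
  rw [MeasureTheory.Measure.volume_eq_prod ℝ ℝ] at hGint ⊢
  rw [MeasureTheory.integral_prod _ hGint]
  have hinner : ∀ x : ℝ, (∫ y : ℝ, V ((x : ℂ) + y * I)) = 0 := by
    intro x
    set P : ℝ → ℝ := fun y => φ ((x : ℂ) + y * I) * g2 ((x : ℂ) + y * I) with hPdef
    set F : ℝ → ℝ := fun y => V ((x : ℂ) + y * I) with hFdef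
    have habs_ge : ∀ y : ℝ, |y| ≤ ‖(x : ℂ) + y * I‖ := fun y => by
      simpa using Complex.abs_im_le_norm ((x : ℂ) + y * I)
    have hout : ∀ y : ℝ, (1 : ℝ) ≤ |y| → ((x : ℂ) + y * I) ∉ K := by
      intro y hy hmem
      rw [hmemK] at hmem
      have := habs_ge y
      linarith
    have hzero : ∀ y : ℝ, y ∉ Ioc (-1 : ℝ) 1 → F y = 0 := by
      intro y hy
      apply hVsupp
      apply hout
      simp only [mem_Ioc, not_and_or, not_lt, not_le] at hy
      rcases hy with h | h
      · linarith [neg_abs_le y]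
      · linarith [le_abs_self y]
    rw [← setIntegral_eq_integral_of_forall_compl_eq_zero hzero]
    rw [← intervalIntegral.integral_of_le (by norm_num : (-1 : ℝ) ≤ 1)]
    have hlc : Continuous fun t : ℝ => (x : ℂ) + t * I :=
      continuous_const.add (Complex.continuous_ofReal.mul continuous_const)
    have hP1 : P 1 = 0 := by
      rw [hPdef]; dsimp only
      rw [hφdef, phi_zero hR hRR' _ (le_trans hR'.le (by simpa using habs_ge 1)), zero_mul]
    have hPm1 : P (-1) = 0 := by
      rw [hPdef]; dsimp only
      rw [hφdef, phi_zero hR hRR' _ (le_trans hR'.le (by simpa using habs_ge (-1))), zero_mul]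
    have hPcont : Continuous P := by
      rw [continuous_iff_continuousAt]
      intro y
      by_cases hzU : ((x : ℂ) + y * I) ∈ U
      · have c1 : ContinuousAt (phiRR R R') ((x : ℂ) + y * I) :=
          (phi_continuous hR hRR').continuousAt
        have c2 : ContinuousAt g2 ((x : ℂ) + y * I) := hg2cont.continuousAt (hU.mem_nhds hzU)
        exact ContinuousAt.mul
          (ContinuousAt.comp (f := fun t : ℝ => (x : ℂ) + t * I) (x := y) c1 hlc.continuousAt)
          (ContinuousAt.comp (f := fun t : ℝ => (x : ℂ) + t * I) (x := y) c2 hlc.continuousAt)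
      · have hgt : R' < ‖(x : ℂ) + y * I‖ := by
          by_contra h; push_neg at h; exact hzU (hUsub ((hmemK _).2 h))
        have ho : IsOpen {w : ℂ | R' < ‖w‖} :=
          isOpen_lt continuous_const continuous_norm
        have hev : P =ᶠ[nhds y] fun _ => (0 : ℝ) := by
          filter_upwards [hlc.continuousAt.preimage_mem_nhds (ho.mem_nhds hgt)] with t ht
          rw [hPdef]; dsimp only
          rw [hφdef, phi_zero hR hRR' _ (le_of_lt ht), zero_mul]
        exact (continuousAt_congr hev).2 continuousAt_const
    have hFint : IntervalIntegrable F volume (-1) 1 :=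
      intervalIntegrable_of_bound (mV.comp hlc.measurable) M (-1) 1 (fun y => hVb _)
    set s : Finset ℝ := {Real.sqrt (R ^ 2 - x ^ 2), -Real.sqrt (R ^ 2 - x ^ 2),
      Real.sqrt (R' ^ 2 - x ^ 2), -Real.sqrt (R' ^ 2 - x ^ 2)} with hsdef
    have hderiv : ∀ y ∈ Ioo (-1 : ℝ) 1, y ∉ s → HasDerivAt P (F y) y := by
      intro y hy hys
      have hzre : ((x : ℂ) + y * I).re = x := by simp
      have hzim : ((x : ℂ) + y * I).im = y := by simp
      have habs2 : ‖(x : ℂ) + y * I‖ ^ 2 = x ^ 2 + y ^ 2 := by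
        rw [Complex.sq_norm, Complex.normSq_apply, hzre, hzim]; ring
      have hnotmem : ∀ c : ℝ, 0 < c → ‖(x : ℂ) + y * I‖ = c →
          |y| = Real.sqrt (c ^ 2 - x ^ 2) := by
        intro c hc habs
        rw [← Real.sqrt_sq_eq_abs]
        congr 1
        have : x ^ 2 + y ^ 2 = c ^ 2 := by rw [← habs2, habs]
        linarith
      have hrR : ‖(x : ℂ) + y * I‖ ≠ R := by
        intro h
        have h' := hnotmem R hR h
        rcases (abs_eq (Real.sqrt_nonneg _)).1 h' with h'' | h''
        · exact hys (by rw [hsdef]; simp [h''])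
        · exact hys (by rw [hsdef]; simp [h''])
      have hrR' : ‖(x : ℂ) + y * I‖ ≠ R' := by
        intro h
        have h' := hnotmem R' hR'0 h
        rcases (abs_eq (Real.sqrt_nonneg _)).1 h' with h'' | h''
        · exact hys (by rw [hsdef]; simp [h''])
        · exact hys (by rw [hsdef]; simp [h''])
      rcases lt_trichotomy (‖(x : ℂ) + y * I‖) R with hlt | heq | hgt
      · have hzU : ((x : ℂ) + y * I) ∈ U := hUsub ((hmemK _).2 (by linarith))
        have hg2line : HasDerivAt (fun t : ℝ => g2 ((x : ℂ) + t * I))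
            (h2 ((x : ℂ) + y * I)) y := by
          have := (hg2d _ hzU).hasFDerivAt.comp_hasDerivAt y (hasDerivAt_line_y x y)
          exact this
        have hFx : F y = h2 ((x : ℂ) + y * I) := by
          rw [hFdef]; dsimp only; rw [hVdef]; dsimp only
          rw [hψ0 _ (by push_neg; intro h'; linarith), hφdef, phi_one _ (le_of_lt hlt)]
          ring
        rw [hFx]
        refine hg2line.congr_of_eventuallyEq ?_
        have ho : IsOpen {w : ℂ | ‖w‖ < R} :=
          isOpen_lt continuous_norm continuous_const
        filter_upwards [hlc.continuousAt.preimage_mem_nhds (ho.mem_nhds hlt)] with t ht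
        rw [hPdef]; dsimp only
        rw [hφdef, phi_one _ (le_of_lt ht), one_mul]
      · exact absurd heq hrR
      rcases lt_trichotomy (‖(x : ℂ) + y * I‖) R' with hlt' | heq' | hgt'
      · have hzU : ((x : ℂ) + y * I) ∈ U := hUsub ((hmemK _).2 hlt'.le)
        have hg2line : HasDerivAt (fun t : ℝ => g2 ((x : ℂ) + t * I))
            (h2 ((x : ℂ) + y * I)) y := by
          have := (hg2d _ hzU).hasFDerivAt.comp_hasDerivAt y (hasDerivAt_line_y x y)
          exact this
        have hφline := phi_hasDerivAt_y hR hRR' x y hgt hlt'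
        have hprod := hφline.mul hg2line
        have hFx : F y = -(1 / Real.log (R' / R)) * y / (x ^ 2 + y ^ 2) *
            g2 ((x : ℂ) + y * I) + phiRR R R' ((x : ℂ) + y * I) * h2 ((x : ℂ) + y * I) := by
          rw [hFdef]; dsimp only; rw [hVdef]; dsimp only
          rw [hψ2def]; dsimp only
          rw [if_pos ⟨hgt, hlt'⟩, hzre, hzim, hφdef, hA]
        rw [hFx]
        refine hprod.congr_deriv ?_; ring
      · exact absurd heq' hrR'
      · have hFx : F y = 0 := by
          rw [hFdef]; dsimp only; rw [hVdef]; dsimp only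
          rw [hψ0 _ (by push_neg; intro _; linarith), hφdef, phi_zero hR hRR' _ hgt'.le]
          ring
        rw [hFx]
        have ho : IsOpen {w : ℂ | R' < ‖w‖} :=
          isOpen_lt continuous_const continuous_norm
        refine (hasDerivAt_const y (0 : ℝ)).congr_of_eventuallyEq ?_
        filter_upwards [hlc.continuousAt.preimage_mem_nhds (ho.mem_nhds hgt')] with t ht
        rw [hPdef]; dsimp only
        rw [hφdef, phi_zero hR hRR' _ (le_of_lt ht), zero_mul]
    rw [ftc_finset s P F (-1) 1 (by norm_num) hPcont.continuousOn hderiv hFint, hP1, hPm1,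
      sub_zero]
  have : ∀ x : ℝ, (∫ y : ℝ, (fun p : ℝ × ℝ => V ((p.1 : ℂ) + p.2 * I)) (x, y)) = 0 :=
    fun x => hinner x
  simp_rw [this]
  simp

end IBP

section Polar

variable {R R' : ℝ}

lemma polar_bound (hR : 0 < R) (hRR' : R < R') (hR' : R' < 1)
    (f : ℂ → ℝ) (U : Set ℂ) (hU : IsOpen U) (hUsub : Metric.closedBall (0 : ℂ) R' ⊆ U)
    (hf : ContDiffOn ℝ 2 f U)
    (C : ℝ) (hC : 0 ≤ C) (hfC : ∀ z : ℂ, ‖z‖ ≤ R' → |f z| ≤ C) :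
    |∫ z : ℂ, ((if R < ‖z‖ ∧ ‖z‖ < R' then
        -(1 / Real.log (R' / R)) * z.re / (z.re ^ 2 + z.im ^ 2) else 0) * fderiv ℝ f z 1
      + (if R < ‖z‖ ∧ ‖z‖ < R' then
        -(1 / Real.log (R' / R)) * z.im / (z.re ^ 2 + z.im ^ 2) else 0) * fderiv ℝ f z I)| ≤
      4 * Real.pi * (1 / Real.log (R' / R)) * C := by
  classical
  have hR'0 : 0 < R' := hR.trans hRR'
  have hL : 0 < Real.log (R' / R) := log_RR_pos hR hRR'
  set A : ℝ := 1 / Real.log (R' / R) with hA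
  have hA0 : 0 < A := by positivity
  set g1 : ℂ → ℝ := fun w => fderiv ℝ f w 1 with hg1def
  set g2 : ℂ → ℝ := fun w => fderiv ℝ f w I with hg2def
  set ψ1 : ℂ → ℝ := fun z => if R < ‖z‖ ∧ ‖z‖ < R' then
      -A * z.re / (z.re ^ 2 + z.im ^ 2) else 0 with hψ1def
  set ψ2 : ℂ → ℝ := fun z => if R < ‖z‖ ∧ ‖z‖ < R' then
      -A * z.im / (z.re ^ 2 + z.im ^ 2) else 0 with hψ2def
  set K : Set ℂ := Metric.closedBall (0 : ℂ) R' with hKdef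
  set W : ℂ → ℝ := fun z => ψ1 z * g1 z + ψ2 z * g2 z with hWdef
  show |∫ z : ℂ, W z| ≤ 4 * Real.pi * A * C
  have hmemK : ∀ z : ℂ, z ∈ K ↔ ‖z‖ ≤ R' := fun z => by
    rw [hKdef, Metric.mem_closedBall, Complex.dist_eq, sub_zero]
  set E : ℝ → ℂ := fun θ => (Real.cos θ : ℂ) + (Real.sin θ : ℂ) * I with hEdef
  have hEabs : ∀ θ, ‖E θ‖ = 1 := by
    intro θ
    rw [hEdef]
    dsimp only
    rw [Complex.norm_add_mul_I,
      show Real.cos θ ^ 2 + Real.sin θ ^ 2 = 1 from by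
        rw [← Real.sin_sq_add_cos_sq θ]; ring]
    exact Real.sqrt_one
  have hEK : ∀ (c θ : ℝ), 0 ≤ c → c ≤ R' → ((c : ℂ) * E θ) ∈ K := by
    intro c θ h0 h1
    rw [hmemK, norm_mul, hEabs, mul_one, Complex.norm_real, Real.norm_eq_abs, _root_.abs_of_nonneg h0]
    exact h1
  have hfd : ∀ z ∈ U, DifferentiableAt ℝ f z := fun z hz =>
    (hf.differentiableOn (by norm_num)).differentiableAt (hU.mem_nhds hz)
  have hg1c : ContDiffOn ℝ 1 g1 U := contDiffOn_fderiv_apply f U hU hf 1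
  have hg2c : ContDiffOn ℝ 1 g2 U := contDiffOn_fderiv_apply f U hU hf I
  have mg1 : Measurable g1 := measurable_fderiv_apply_const ℝ f 1
  have mg2 : Measurable g2 := measurable_fderiv_apply_const ℝ f I
  have mset : MeasurableSet {z : ℂ | R < ‖z‖ ∧ ‖z‖ < R'} :=
    (measurableSet_lt measurable_const continuous_norm.measurable).inter
      (measurableSet_lt continuous_norm.measurable measurable_const)
  have mψ1 : Measurable ψ1 := Measurable.ite mset
    ((measurable_const.mul Complex.measurable_re).div
      ((Complex.measurable_re.pow_const 2).add (Complex.measurable_im.pow_const 2)))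
    measurable_const
  have mψ2 : Measurable ψ2 := Measurable.ite mset
    ((measurable_const.mul Complex.measurable_im).div
      ((Complex.measurable_re.pow_const 2).add (Complex.measurable_im.pow_const 2)))
    measurable_const
  have mW : Measurable W := (mψ1.mul mg1).add (mψ2.mul mg2)
  have hKc : IsCompact K := isCompact_closedBall _ _
  obtain ⟨B1, hB1⟩ := hKc.exists_bound_of_continuousOn ((hg1c.continuousOn).mono hUsub)
  obtain ⟨B2, hB2⟩ := hKc.exists_bound_of_continuousOn ((hg2c.continuousOn).mono hUsub)
  set B : ℝ := max 0 (max B1 B2) with hBdef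
  have hB0 : 0 ≤ B := le_max_left _ _
  have hBg1 : ∀ z ∈ K, |g1 z| ≤ B := fun z hz => le_trans (by simpa using hB1 z hz)
    (le_trans (le_max_left _ _) (le_max_right _ _))
  have hBg2 : ∀ z ∈ K, |g2 z| ≤ B := fun z hz => le_trans (by simpa using hB2 z hz)
    (le_trans (le_max_right _ _) (le_max_right _ _))
  have hψ10 : ∀ z : ℂ, ¬(R < ‖z‖ ∧ ‖z‖ < R') → ψ1 z = 0 :=
    fun z h => if_neg h
  have hψ20 : ∀ z : ℂ, ¬(R < ‖z‖ ∧ ‖z‖ < R') → ψ2 z = 0 :=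
    fun z h => if_neg h
  have hψ1b : ∀ z : ℂ, |ψ1 z| ≤ A / R := by
    intro z
    rw [hψ1def]
    dsimp only
    split_ifs with h
    · obtain ⟨ha, hb⟩ := h
      have hr0 : 0 < ‖z‖ := hR.trans ha
      have hsq : z.re ^ 2 + z.im ^ 2 = ‖z‖ ^ 2 := by
        rw [Complex.sq_norm, Complex.normSq_apply]; ring
      have habs : |-(A * z.re) / ‖z‖ ^ 2| = A * |z.re| / ‖z‖ ^ 2 := by
        rw [abs_div, abs_neg, abs_mul, _root_.abs_of_pos hA0,
          _root_.abs_of_pos (pow_pos hr0 2)]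
      rw [hsq, neg_mul] at *
      rw [habs]
      have hre : |z.re| ≤ ‖z‖ := Complex.abs_re_le_norm z
      calc A * |z.re| / ‖z‖ ^ 2 ≤ A * ‖z‖ / ‖z‖ ^ 2 := by gcongr
        _ = A / ‖z‖ := by field_simp [hr0.ne']
        _ ≤ A / R := div_le_div_of_nonneg_left hA0.le hR ha.le
    · simp; positivity
  have hψ2b : ∀ z : ℂ, |ψ2 z| ≤ A / R := by
    intro z
    rw [hψ2def]
    dsimp only
    split_ifs with h
    · obtain ⟨ha, hb⟩ := h
      have hr0 : 0 < ‖z‖ := hR.trans ha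
      have hsq : z.re ^ 2 + z.im ^ 2 = ‖z‖ ^ 2 := by
        rw [Complex.sq_norm, Complex.normSq_apply]; ring
      have habs : |-(A * z.im) / ‖z‖ ^ 2| = A * |z.im| / ‖z‖ ^ 2 := by
        rw [abs_div, abs_neg, abs_mul, _root_.abs_of_pos hA0,
          _root_.abs_of_pos (pow_pos hr0 2)]
      rw [hsq, neg_mul] at *
      rw [habs]
      have him : |z.im| ≤ ‖z‖ := Complex.abs_im_le_norm z
      calc A * |z.im| / ‖z‖ ^ 2 ≤ A * ‖z‖ / ‖z‖ ^ 2 := by gcongr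
        _ = A / ‖z‖ := by field_simp [hr0.ne']
        _ ≤ A / R := div_le_div_of_nonneg_left hA0.le hR ha.le
    · simp; positivity
  have hWb : ∀ z ∈ K, |W z| ≤ A / R * B + A / R * B := by
    intro z hz
    calc |W z| ≤ |ψ1 z * g1 z| + |ψ2 z * g2 z| := abs_add_le _ _
      _ ≤ A / R * B + A / R * B := by
          rw [abs_mul, abs_mul]
          gcongr
          · exact hψ1b z
          · exact hBg1 z hz
          · exact hψ2b z
          · exact hBg2 z hz
  -- pass to polar coordinates
  rw [← Complex.integral_comp_polarCoord_symm W]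
  set Q : ℝ × ℝ → ℝ := fun p => p.1 • W (Complex.polarCoord.symm p) with hQdef
  have hsymm_eq : ∀ p : ℝ × ℝ, Complex.polarCoord.symm p = (p.1 : ℂ) * E p.2 := by
    intro p
    rw [Complex.polarCoord_symm_apply, hEdef]
  set box : Set (ℝ × ℝ) := Ioo R R' ×ˢ Ioo (-Real.pi) Real.pi with hboxdef
  have hboxm : MeasurableSet box := measurableSet_Ioo.prod measurableSet_Ioo
  have htm : MeasurableSet polarCoord.target := by
    rw [polarCoord_target]; exact measurableSet_Ioi.prod measurableSet_Ioo
  have hsub : box ⊆ polarCoord.target := by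
    rw [hboxdef, polarCoord_target]
    exact Set.prod_mono (fun r hr => mem_Ioi.2 (hR.trans hr.1)) subset_rfl
  have hWr : ∀ p : ℝ × ℝ, p.1 ∉ Ioo R R' → 0 < p.1 → Q p = 0 := by
    intro p hp hp0
    have habs : ‖Complex.polarCoord.symm p‖ = p.1 := by
      rw [norm_polarCoord_symm, _root_.abs_of_pos hp0]
    have hW0 : W (Complex.polarCoord.symm p) = 0 := by
      rw [hWdef]; dsimp only
      rw [hψ10 _ (by rw [habs]; simpa [mem_Ioo] using hp),
        hψ20 _ (by rw [habs]; simpa [mem_Ioo] using hp)]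
      ring
    rw [hQdef]; dsimp only; rw [hW0, smul_zero]
  have hstep : (∫ p in polarCoord.target, Q p) = ∫ p in box, Q p := by
    have h1 : EqOn Q (box.indicator Q) polarCoord.target := by
      intro p hp
      rw [polarCoord_target] at hp
      by_cases hb : p ∈ box
      · rw [Set.indicator_of_mem hb]
      · rw [Set.indicator_of_notMem hb]
        refine hWr p (fun hr => hb ?_) hp.1
        rw [hboxdef]
        exact ⟨hr, hp.2⟩
    rw [setIntegral_congr_fun htm h1, setIntegral_indicator hboxm,
      inter_eq_self_of_subset_right hsub]
  rw [hstep, ← integral_indicator hboxm]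
  -- measurability and integrability of the indicator
  have hscont : Continuous fun p : ℝ × ℝ => Complex.polarCoord.symm p := by
    have heq : (fun p : ℝ × ℝ => Complex.polarCoord.symm p)
        = fun p : ℝ × ℝ => (p.1 : ℂ) * E p.2 := funext hsymm_eq
    rw [heq, hEdef]
    exact (Complex.continuous_ofReal.comp continuous_fst).mul
      ((Complex.continuous_ofReal.comp (Real.continuous_cos.comp continuous_snd)).add
        ((Complex.continuous_ofReal.comp (Real.continuous_sin.comp continuous_snd)).mul
          continuous_const))
  have hQm : Measurable Q := by
    rw [hQdef]
    exact measurable_fst.smul (mW.comp hscont.measurable)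
  have hQb : ∀ p ∈ box, |Q p| ≤ R' * (A / R * B + A / R * B) := by
    intro p hp
    rw [hboxdef] at hp
    have hp1 : 0 < p.1 := hR.trans hp.1.1
    have hzK : Complex.polarCoord.symm p ∈ K := by
      rw [hmemK, norm_polarCoord_symm, _root_.abs_of_pos hp1]
      exact hp.1.2.le
    calc |Q p| = |p.1| * |W (Complex.polarCoord.symm p)| := by
          rw [hQdef]; dsimp only; rw [smul_eq_mul, abs_mul]
      _ ≤ R' * (A / R * B + A / R * B) := by
          gcongr
          · rw [_root_.abs_of_pos hp1]; exact hp.1.2.le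
          · exact hWb _ hzK
  have hboxfin : volume box < ⊤ := by
    rw [hboxdef, MeasureTheory.Measure.volume_eq_prod, MeasureTheory.Measure.prod_prod,
      Real.volume_Ioo, Real.volume_Ioo]
    exact ENNReal.mul_lt_top ENNReal.ofReal_lt_top ENNReal.ofReal_lt_top
  have hQint : Integrable (box.indicator Q) volume := by
    refine integrable_of_bound_of_support (hQm.indicator hboxm).aestronglyMeasurable hboxm
      hboxfin (M := R' * (A / R * B + A / R * B)) ?_ ?_
    · intro p hp
      rw [Set.indicator_of_mem hp]
      exact hQb p hp
    · intro p hp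
      exact Set.indicator_of_notMem hp _
  rw [MeasureTheory.Measure.volume_eq_prod ℝ ℝ] at hQint ⊢
  rw [MeasureTheory.integral_prod_symm _ hQint]
  -- derivative along rays
  have hray : ∀ (r θ : ℝ), r ∈ Set.uIcc R R' →
      HasDerivAt (fun t : ℝ => -A * f ((t : ℂ) * E θ))
        (-A * fderiv ℝ f ((r : ℂ) * E θ) (E θ)) r := by
    intro r θ hr
    rw [uIcc_of_le hRR'.le] at hr
    have hzU : ((r : ℂ) * E θ) ∈ U := hUsub (hEK r θ (hR.le.trans hr.1) hr.2)
    have hder : HasDerivAt (fun t : ℝ => (t : ℂ) * E θ) (E θ) r := by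
      rw [hEdef]
      exact hasDerivAt_ray r θ
    have hd := (hfd _ hzU).hasFDerivAt.comp_hasDerivAt r hder
    exact hd.const_mul (-A)
  have hraycont : ∀ θ : ℝ, ContinuousOn
      (fun r : ℝ => -A * fderiv ℝ f ((r : ℂ) * E θ) (E θ)) (Set.uIcc R R') := by
    intro θ
    apply continuousOn_const.mul
    have h1 : ContinuousOn (fun z : ℂ => fderiv ℝ f z (E θ)) U :=
      continuousOn_fderiv_apply f U hU (hf.of_le (by norm_num)) (E θ)
    have h2 : Continuous fun r : ℝ => (r : ℂ) * E θ :=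
      Complex.continuous_ofReal.mul continuous_const
    refine h1.comp h2.continuousOn (fun r hr => ?_)
    rw [uIcc_of_le hRR'.le] at hr
    exact hUsub (hEK r θ (hR.le.trans hr.1) hr.2)
  -- inner integral
  have hinner : ∀ θ : ℝ, (∫ r : ℝ, box.indicator Q (r, θ)) =
      (Ioo (-Real.pi) Real.pi).indicator
        (fun t => -A * f ((R' : ℂ) * E t) - -A * f ((R : ℂ) * E t)) θ := by
    intro θ
    by_cases hθ : θ ∈ Ioo (-Real.pi) Real.pi
    · rw [Set.indicator_of_mem hθ]
      have hind : ∀ r : ℝ, box.indicator Q (r, θ)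
          = (Ioo R R').indicator (fun t => Q (t, θ)) r := by
        intro r
        by_cases hr : r ∈ Ioo R R'
        · rw [Set.indicator_of_mem hr, Set.indicator_of_mem (by rw [hboxdef]; exact ⟨hr, hθ⟩)]
        · rw [Set.indicator_of_notMem hr,
            Set.indicator_of_notMem (fun hb => hr (by rw [hboxdef] at hb; exact hb.1))]
      simp_rw [hind]
      rw [integral_indicator measurableSet_Ioo, ← integral_Ioc_eq_integral_Ioo,
        ← intervalIntegral.integral_of_le hRR'.le]
      have hae : ∀ᵐ r : ℝ, r ≠ R' := by
        have hsing : {r : ℝ | ¬ r ≠ R'} = {R'} := by ext r; simp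
        rw [ae_iff, hsing]
        exact measure_singleton R'
      have heq : (∫ r in R..R', Q (r, θ))
          = ∫ r in R..R', -A * fderiv ℝ f ((r : ℂ) * E θ) (E θ) := by
        apply intervalIntegral.integral_congr_ae
        filter_upwards [hae] with r hrne hrmem
        rw [uIoc_of_le hRR'.le] at hrmem
        have hrIoo : r ∈ Ioo R R' := ⟨hrmem.1, lt_of_le_of_ne hrmem.2 hrne⟩
        have hr0 : 0 < r := hR.trans hrIoo.1
        have habs : ‖(r : ℂ) * E θ‖ = r := by
          rw [norm_mul, hEabs, mul_one, Complex.norm_real, Real.norm_eq_abs, _root_.abs_of_pos hr0]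
        have hre : ((r : ℂ) * E θ).re = r * Real.cos θ := by
          rw [hEdef]
          simp only [Complex.mul_re, Complex.mul_im, Complex.add_re, Complex.add_im,
            Complex.ofReal_re, Complex.ofReal_im, Complex.I_re, Complex.I_im]
          ring
        have him : ((r : ℂ) * E θ).im = r * Real.sin θ := by
          rw [hEdef]
          simp only [Complex.mul_re, Complex.mul_im, Complex.add_re, Complex.add_im,
            Complex.ofReal_re, Complex.ofReal_im, Complex.I_re, Complex.I_im]
          ring
        have hcos2 : (r * Real.cos θ) ^ 2 + (r * Real.sin θ) ^ 2 = r ^ 2 := by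
          have := Real.sin_sq_add_cos_sq θ
          nlinarith
        have hfE : fderiv ℝ f ((r : ℂ) * E θ) (E θ)
            = Real.cos θ * g1 ((r : ℂ) * E θ) + Real.sin θ * g2 ((r : ℂ) * E θ) := by
          have hEsm : E θ = Real.cos θ • (1 : ℂ) + Real.sin θ • I := by
            rw [hEdef]; simp [Complex.real_smul]
          rw [hEsm, map_add, ContinuousLinearMap.map_smul, ContinuousLinearMap.map_smul]
          simp only [smul_eq_mul]
          rfl
        show Q (r, θ) = -A * fderiv ℝ f ((r : ℂ) * E θ) (E θ)
        rw [hQdef]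
        dsimp only
        rw [hsymm_eq (r, θ)]
        dsimp only
        rw [hWdef]
        dsimp only
        rw [hψ1def, hψ2def]
        dsimp only
        rw [if_pos (by rw [habs]; exact hrIoo), if_pos (by rw [habs]; exact hrIoo)]
        rw [hre, him, hcos2, hfE, smul_eq_mul]
        field_simp
        ring
      rw [heq,
        intervalIntegral.integral_eq_sub_of_hasDerivAt (fun r hr => hray r θ hr)
          (hraycont θ).intervalIntegrable]
    · rw [Set.indicator_of_notMem hθ]
      have : ∀ r : ℝ, box.indicator Q (r, θ) = 0 := by
        intro r
        exact Set.indicator_of_notMem (fun hb => hθ (by rw [hboxdef] at hb; exact hb.2)) _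
      simp_rw [this]
      exact integral_zero _ _
  have houter : ∀ θ : ℝ, (∫ r : ℝ, (box.indicator Q) (r, θ)) =
      (Ioo (-Real.pi) Real.pi).indicator
        (fun t => -A * f ((R' : ℂ) * E t) - -A * f ((R : ℂ) * E t)) θ := hinner
  simp_rw [houter]
  rw [integral_indicator measurableSet_Ioo]
  rw [← Real.norm_eq_abs]
  calc ‖∫ θ in Ioo (-Real.pi) Real.pi,
        (-A * f ((R' : ℂ) * E θ) - -A * f ((R : ℂ) * E θ))‖
      ≤ (2 * A * C) * (volume (Ioo (-Real.pi) Real.pi)).toReal := by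
        apply norm_setIntegral_le_of_norm_le_const ?_
        · intro θ _
          rw [Real.norm_eq_abs,
            show -A * f ((R' : ℂ) * E θ) - -A * f ((R : ℂ) * E θ)
              = A * (f ((R : ℂ) * E θ) - f ((R' : ℂ) * E θ)) from by ring,
            abs_mul, _root_.abs_of_pos hA0]
          have h1 : |f ((R : ℂ) * E θ)| ≤ C := by
            apply hfC
            rw [norm_mul, hEabs, mul_one, Complex.norm_real, Real.norm_eq_abs, _root_.abs_of_pos hR]
            exact hRR'.le
          have h2 : |f ((R' : ℂ) * E θ)| ≤ C := by
            apply hfC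
            rw [norm_mul, hEabs, mul_one, Complex.norm_real, Real.norm_eq_abs, _root_.abs_of_pos hR'0]
          calc A * |f ((R : ℂ) * E θ) - f ((R' : ℂ) * E θ)|
              ≤ A * (|f ((R : ℂ) * E θ)| + |f ((R' : ℂ) * E θ)|) := by
                gcongr
                simpa only [Real.norm_eq_abs] using norm_sub_le (f ((R : ℂ) * E θ)) (f ((R' : ℂ) * E θ))
            _ ≤ A * (C + C) := by gcongr
            _ = 2 * A * C := by ring
        · rw [Real.volume_Ioo]
          exact ENNReal.ofReal_lt_top
    _ = 4 * Real.pi * A * C := by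
        rw [Real.volume_Ioo, ENNReal.toReal_ofReal (by linarith [Real.pi_pos])]
        ring

end Polar

theorem abs_integral_phi_lap_le (R R' : ℝ) (hR : 0 < R) (hRR' : R < R') (hR' : R' < 1)
    (A : ℝ) (hA : A = 1 / Real.log (R' / R))
    (f : ℂ → ℝ) (U : Set ℂ) (hU : IsOpen U) (hUsub : Metric.closedBall (0 : ℂ) R' ⊆ U)
    (hf : ContDiffOn ℝ 2 f U)
    (C : ℝ) (hC : 0 ≤ C) (hfC : ∀ z : ℂ, ‖z‖ ≤ R' → |f z| ≤ C) :
    |∫ z in Metric.ball (0 : ℂ) 1, phiRR R R' z * lap f z ∂volume| ≤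
      4 * Real.pi * A * C := by
  classical
  subst hA
  have hR'0 : 0 < R' := hR.trans hRR'
  have hL : 0 < Real.log (R' / R) := log_RR_pos hR hRR'
  have hA0 : 0 < 1 / Real.log (R' / R) := by positivity
  -- names for the six auxiliary functions (no `set`, to keep syntactic match with lemmas)
  have e1 := ibp_x hR hRR' hR' f U hU hUsub hf
  have e2 := ibp_y hR hRR' hR' f U hU hUsub hf
  have e3 := polar_bound hR hRR' hR' f U hU hUsub hf C hC hfC
  -- integrability facts
  have hmemK : ∀ z : ℂ, z ∈ Metric.closedBall (0 : ℂ) R' ↔ ‖z‖ ≤ R' := fun z => by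
    rw [Metric.mem_closedBall, Complex.dist_eq, sub_zero]
  have hKc : IsCompact (Metric.closedBall (0 : ℂ) R') := isCompact_closedBall _ _
  have hg1c : ContDiffOn ℝ 1 (fun w => fderiv ℝ f w 1) U := contDiffOn_fderiv_apply f U hU hf 1
  have hg2c : ContDiffOn ℝ 1 (fun w => fderiv ℝ f w I) U := contDiffOn_fderiv_apply f U hU hf I
  have hh1cont : ContinuousOn (fun z => fderiv ℝ (fun w => fderiv ℝ f w 1) z 1) U :=
    continuousOn_fderiv_apply _ U hU hg1c 1
  have hh2cont : ContinuousOn (fun z => fderiv ℝ (fun w => fderiv ℝ f w I) z I) U :=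
    continuousOn_fderiv_apply _ U hU hg2c I
  obtain ⟨B1, hB1⟩ := hKc.exists_bound_of_continuousOn (hg1c.continuousOn.mono hUsub)
  obtain ⟨B2, hB2⟩ := hKc.exists_bound_of_continuousOn (hg2c.continuousOn.mono hUsub)
  obtain ⟨B3, hB3⟩ := hKc.exists_bound_of_continuousOn (hh1cont.mono hUsub)
  obtain ⟨B4, hB4⟩ := hKc.exists_bound_of_continuousOn (hh2cont.mono hUsub)
  set B : ℝ := max 0 (max (max B1 B2) (max B3 B4)) with hBdef
  have hB0 : 0 ≤ B := le_max_left _ _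
  have hBg1 : ∀ z ∈ Metric.closedBall (0 : ℂ) R', |fderiv ℝ f z 1| ≤ B := fun z hz =>
    le_trans (by simpa using hB1 z hz) (le_trans (le_trans (le_max_left _ _) (le_max_left _ _))
      (le_max_right _ _))
  have hBg2 : ∀ z ∈ Metric.closedBall (0 : ℂ) R', |fderiv ℝ f z I| ≤ B := fun z hz =>
    le_trans (by simpa using hB2 z hz) (le_trans (le_trans (le_max_right _ _) (le_max_left _ _))
      (le_max_right _ _))
  have hBh1 : ∀ z ∈ Metric.closedBall (0 : ℂ) R',
      |fderiv ℝ (fun w => fderiv ℝ f w 1) z 1| ≤ B := fun z hz =>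
    le_trans (by simpa using hB3 z hz) (le_trans (le_trans (le_max_left _ _) (le_max_right _ _))
      (le_max_right _ _))
  have hBh2 : ∀ z ∈ Metric.closedBall (0 : ℂ) R',
      |fderiv ℝ (fun w => fderiv ℝ f w I) z I| ≤ B := fun z hz =>
    le_trans (by simpa using hB4 z hz) (le_trans (le_trans (le_max_right _ _) (le_max_right _ _))
      (le_max_right _ _))
  have mg1 : Measurable fun w => fderiv ℝ f w 1 := measurable_fderiv_apply_const ℝ f 1
  have mg2 : Measurable fun w => fderiv ℝ f w I := measurable_fderiv_apply_const ℝ f I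
  have mh1 : Measurable fun z => fderiv ℝ (fun w => fderiv ℝ f w 1) z 1 :=
    measurable_fderiv_apply_const ℝ _ 1
  have mh2 : Measurable fun z => fderiv ℝ (fun w => fderiv ℝ f w I) z I :=
    measurable_fderiv_apply_const ℝ _ I
  have mφ : Measurable (phiRR R R') := (phi_continuous hR hRR').measurable
  have mset : MeasurableSet {z : ℂ | R < ‖z‖ ∧ ‖z‖ < R'} :=
    (measurableSet_lt measurable_const continuous_norm.measurable).inter
      (measurableSet_lt continuous_norm.measurable measurable_const)
  have mψ1 : Measurable fun z : ℂ => (if R < ‖z‖ ∧ ‖z‖ < R' then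
      -(1 / Real.log (R' / R)) * z.re / (z.re ^ 2 + z.im ^ 2) else 0) := Measurable.ite mset
    ((measurable_const.mul Complex.measurable_re).div
      ((Complex.measurable_re.pow_const 2).add (Complex.measurable_im.pow_const 2)))
    measurable_const
  have mψ2 : Measurable fun z : ℂ => (if R < ‖z‖ ∧ ‖z‖ < R' then
      -(1 / Real.log (R' / R)) * z.im / (z.re ^ 2 + z.im ^ 2) else 0) := Measurable.ite mset
    ((measurable_const.mul Complex.measurable_im).div
      ((Complex.measurable_re.pow_const 2).add (Complex.measurable_im.pow_const 2)))
    measurable_const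
  have hψ1b : ∀ z : ℂ, |(if R < ‖z‖ ∧ ‖z‖ < R' then
      -(1 / Real.log (R' / R)) * z.re / (z.re ^ 2 + z.im ^ 2) else 0)|
        ≤ (1 / Real.log (R' / R)) / R := by
    intro z
    split_ifs with h
    · obtain ⟨ha, hb⟩ := h
      have hr0 : 0 < ‖z‖ := hR.trans ha
      have hsq : z.re ^ 2 + z.im ^ 2 = ‖z‖ ^ 2 := by
        rw [Complex.sq_norm, Complex.normSq_apply]; ring
      have habs : |-(1 / Real.log (R' / R) * z.re) / ‖z‖ ^ 2|
          = 1 / Real.log (R' / R) * |z.re| / ‖z‖ ^ 2 := by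
        rw [abs_div, abs_neg, abs_mul, _root_.abs_of_pos hA0,
          _root_.abs_of_pos (pow_pos hr0 2)]
      rw [hsq, neg_mul, habs]
      have hre : |z.re| ≤ ‖z‖ := Complex.abs_re_le_norm z
      calc 1 / Real.log (R' / R) * |z.re| / ‖z‖ ^ 2
          ≤ 1 / Real.log (R' / R) * ‖z‖ / ‖z‖ ^ 2 := by gcongr
        _ = 1 / Real.log (R' / R) / ‖z‖ := by field_simp [hr0.ne']
        _ ≤ 1 / Real.log (R' / R) / R := div_le_div_of_nonneg_left hA0.le hR ha.le
    · simp; positivity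
  have hψ2b : ∀ z : ℂ, |(if R < ‖z‖ ∧ ‖z‖ < R' then
      -(1 / Real.log (R' / R)) * z.im / (z.re ^ 2 + z.im ^ 2) else 0)|
        ≤ (1 / Real.log (R' / R)) / R := by
    intro z
    split_ifs with h
    · obtain ⟨ha, hb⟩ := h
      have hr0 : 0 < ‖z‖ := hR.trans ha
      have hsq : z.re ^ 2 + z.im ^ 2 = ‖z‖ ^ 2 := by
        rw [Complex.sq_norm, Complex.normSq_apply]; ring
      have habs : |-(1 / Real.log (R' / R) * z.im) / ‖z‖ ^ 2|
          = 1 / Real.log (R' / R) * |z.im| / ‖z‖ ^ 2 := by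
        rw [abs_div, abs_neg, abs_mul, _root_.abs_of_pos hA0,
          _root_.abs_of_pos (pow_pos hr0 2)]
      rw [hsq, neg_mul, habs]
      have him : |z.im| ≤ ‖z‖ := Complex.abs_im_le_norm z
      calc 1 / Real.log (R' / R) * |z.im| / ‖z‖ ^ 2
          ≤ 1 / Real.log (R' / R) * ‖z‖ / ‖z‖ ^ 2 := by gcongr
        _ = 1 / Real.log (R' / R) / ‖z‖ := by field_simp [hr0.ne']
        _ ≤ 1 / Real.log (R' / R) / R := div_le_div_of_nonneg_left hA0.le hR ha.le
    · simp; positivity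
  have hψ10 : ∀ z : ℂ, ¬(R < ‖z‖ ∧ ‖z‖ < R') →
      (if R < ‖z‖ ∧ ‖z‖ < R' then
        -(1 / Real.log (R' / R)) * z.re / (z.re ^ 2 + z.im ^ 2) else 0) = 0 :=
    fun z h => if_neg h
  have hψ20 : ∀ z : ℂ, ¬(R < ‖z‖ ∧ ‖z‖ < R') →
      (if R < ‖z‖ ∧ ‖z‖ < R' then
        -(1 / Real.log (R' / R)) * z.im / (z.re ^ 2 + z.im ^ 2) else 0) = 0 :=
    fun z h => if_neg h
  have hφb : ∀ z : ℂ, |phiRR R R' z| ≤ 1 := fun z => by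
    rw [_root_.abs_of_nonneg (phi_nonneg hR hRR' z)]; exact phi_le_one hR hRR' z
  have hout : ∀ z : ℂ, z ∉ Metric.closedBall (0 : ℂ) R' →
      R' < ‖z‖ := by
    intro z hz
    by_contra h; push_neg at h; exact hz ((hmemK z).2 h)
  -- integrability of the three combinations
  have hV1int : Integrable (fun z : ℂ => (if R < ‖z‖ ∧ ‖z‖ < R' then
      -(1 / Real.log (R' / R)) * z.re / (z.re ^ 2 + z.im ^ 2) else 0) * fderiv ℝ f z 1
      + phiRR R R' z * fderiv ℝ (fun w => fderiv ℝ f w 1) z 1) volume := by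
    refine integrable_of_bound_of_support (s := Metric.closedBall (0 : ℂ) R')
      ((mψ1.mul mg1).add (mφ.mul mh1)).aestronglyMeasurable
      measurableSet_closedBall measure_closedBall_lt_top
      (M := (1 / Real.log (R' / R)) / R * B + 1 * B) (fun z hz => ?_) (fun z hz => ?_)
    · refine le_trans (abs_add_le _ _) ?_
      rw [abs_mul, abs_mul]
      gcongr
      · exact hψ1b z
      · exact hBg1 z hz
      · exact hφb z
      · exact hBh1 z hz
    · have hgt := hout z hz
      rw [hψ10 z (by push_neg; intro _; linarith), phi_zero hR hRR' z hgt.le]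
      ring
  have hV2int : Integrable (fun z : ℂ => (if R < ‖z‖ ∧ ‖z‖ < R' then
      -(1 / Real.log (R' / R)) * z.im / (z.re ^ 2 + z.im ^ 2) else 0) * fderiv ℝ f z I
      + phiRR R R' z * fderiv ℝ (fun w => fderiv ℝ f w I) z I) volume := by
    refine integrable_of_bound_of_support (s := Metric.closedBall (0 : ℂ) R')
      ((mψ2.mul mg2).add (mφ.mul mh2)).aestronglyMeasurable
      measurableSet_closedBall measure_closedBall_lt_top
      (M := (1 / Real.log (R' / R)) / R * B + 1 * B) (fun z hz => ?_) (fun z hz => ?_)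
    · refine le_trans (abs_add_le _ _) ?_
      rw [abs_mul, abs_mul]
      gcongr
      · exact hψ2b z
      · exact hBg2 z hz
      · exact hφb z
      · exact hBh2 z hz
    · have hgt := hout z hz
      rw [hψ20 z (by push_neg; intro _; linarith), phi_zero hR hRR' z hgt.le]
      ring
  have hWint : Integrable (fun z : ℂ => (if R < ‖z‖ ∧ ‖z‖ < R' then
      -(1 / Real.log (R' / R)) * z.re / (z.re ^ 2 + z.im ^ 2) else 0) * fderiv ℝ f z 1
      + (if R < ‖z‖ ∧ ‖z‖ < R' then
      -(1 / Real.log (R' / R)) * z.im / (z.re ^ 2 + z.im ^ 2) else 0) * fderiv ℝ f z I)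
      volume := by
    refine integrable_of_bound_of_support (s := Metric.closedBall (0 : ℂ) R')
      ((mψ1.mul mg1).add (mψ2.mul mg2)).aestronglyMeasurable
      measurableSet_closedBall measure_closedBall_lt_top
      (M := (1 / Real.log (R' / R)) / R * B + (1 / Real.log (R' / R)) / R * B)
      (fun z hz => ?_) (fun z hz => ?_)
    · refine le_trans (abs_add_le _ _) ?_
      rw [abs_mul, abs_mul]
      gcongr
      · exact hψ1b z
      · exact hBg1 z hz
      · exact hψ2b z
      · exact hBg2 z hz
    · have hgt := hout z hz
      rw [hψ10 z (by push_neg; intro _; linarith), hψ20 z (by push_neg; intro _; linarith)]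
      ring
  -- step A: extend the integral to all of ℂ
  have hstepA : (∫ z in Metric.ball (0 : ℂ) 1, phiRR R R' z * lap f z ∂volume)
      = ∫ z : ℂ, phiRR R R' z * lap f z := by
    apply setIntegral_eq_integral_of_forall_compl_eq_zero
    intro z hz
    have h1z : (1 : ℝ) ≤ ‖z‖ := by
      rw [Metric.mem_ball, Complex.dist_eq, sub_zero, not_lt] at hz
      exact hz
    rw [phi_zero hR hRR' z (le_trans hR'.le h1z), zero_mul]
  -- step B: pointwise decomposition
  have hstepB : (∫ z : ℂ, phiRR R R' z * lap f z)
      = ∫ z : ℂ, (((if R < ‖z‖ ∧ ‖z‖ < R' then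
          -(1 / Real.log (R' / R)) * z.re / (z.re ^ 2 + z.im ^ 2) else 0) * fderiv ℝ f z 1
          + phiRR R R' z * fderiv ℝ (fun w => fderiv ℝ f w 1) z 1)
        + ((if R < ‖z‖ ∧ ‖z‖ < R' then
          -(1 / Real.log (R' / R)) * z.im / (z.re ^ 2 + z.im ^ 2) else 0) * fderiv ℝ f z I
          + phiRR R R' z * fderiv ℝ (fun w => fderiv ℝ f w I) z I)
        - ((if R < ‖z‖ ∧ ‖z‖ < R' then
          -(1 / Real.log (R' / R)) * z.re / (z.re ^ 2 + z.im ^ 2) else 0) * fderiv ℝ f z 1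
          + (if R < ‖z‖ ∧ ‖z‖ < R' then
          -(1 / Real.log (R' / R)) * z.im / (z.re ^ 2 + z.im ^ 2) else 0) * fderiv ℝ f z I)) := by
    apply integral_congr_ae
    apply Filter.Eventually.of_forall
    intro z
    simp only [lap]
    ring
  have hV12int : Integrable (fun z : ℂ =>
      ((if R < ‖z‖ ∧ ‖z‖ < R' then
          -(1 / Real.log (R' / R)) * z.re / (z.re ^ 2 + z.im ^ 2) else 0) * fderiv ℝ f z 1
        + phiRR R R' z * fderiv ℝ (fun w => fderiv ℝ f w 1) z 1)
      + ((if R < ‖z‖ ∧ ‖z‖ < R' then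
          -(1 / Real.log (R' / R)) * z.im / (z.re ^ 2 + z.im ^ 2) else 0) * fderiv ℝ f z I
        + phiRR R R' z * fderiv ℝ (fun w => fderiv ℝ f w I) z I)) volume := hV1int.add hV2int
  rw [hstepA, hstepB, integral_sub hV12int hWint, integral_add hV1int hV2int,
    e1, e2, zero_add, zero_sub, abs_neg]
  exact e3
end

section
/- Let 0 < R < R' < 1, A = 1/log(R'/R), ρ' = (1/2)log((1+R')/(1−R')) − (1/2)log((1+R)/(1−R)), and let φ_{R,R'} : ℂ → ℝ equal 1 on {|z| ≤ R}, equal A·log(R'/|z|) on {R ≤ |z| ≤ R'}, and equal 0 on {|z| ≥ R'}. Then for every ε > 0 there exists δ > 0 such that whenever 1 − δ < R < R' < 1 and ρ' ≥ 1, one has | (∫_𝔻 φ_{R,R'} dv_P) / (4π A ρ') − 1 | < ε. -/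
open Complex Metric Set MeasureTheory

/-- Radial profile of the integrand. -/
noncomputable def gRad (R R' : ℝ) (y : ℝ) : ℝ :=
  (if y ≤ R then 1 else if y ≤ R' then (1 / Real.log (R' / R)) * Real.log (R' / y) else 0)
    * (4 / (1 - y ^ 2) ^ 2)

lemma piece1 (R : ℝ) (h0 : 0 < R) (h1 : R < 1) :
    ∫ y in (0:ℝ)..R, y * (4 / (1 - y ^ 2) ^ 2) = 2 / (1 - R ^ 2) - 2 := by
  have := intervalIntegral.integral_eq_sub_of_hasDerivAt
    (f := fun y : ℝ => 2 / (1 - y ^ 2)) (f' := fun y : ℝ => y * (4 / (1 - y ^ 2) ^ 2))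
    (a := 0) (b := R) ?_ ?_
  · simpa using this
  · intro x hx
    rw [uIcc_of_le h0.le] at hx
    have hne : 1 - x ^ 2 ≠ 0 := by nlinarith [hx.1, hx.2]
    simp only [div_eq_mul_inv]
    have h : HasDerivAt (fun y : ℝ => 1 - y ^ 2) (-(2 * x)) x := by
      simpa using ((hasDerivAt_pow 2 x).const_sub 1)
    have h2 := (h.inv hne).const_mul 2
    convert h2 using 1
    · rfl
    · rfl
    ring
  · apply ContinuousOn.intervalIntegrable
    apply ContinuousOn.mul continuousOn_id
    apply ContinuousOn.div continuousOn_const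
    · fun_prop
    · intro x hx
      rw [uIcc_of_le h0.le] at hx
      have : 1 - x ^ 2 ≠ 0 := by nlinarith [hx.1, hx.2]
      positivity

lemma piece2 (R R' A : ℝ) (h0 : 0 < R) (h1 : R < R') (h2 : R' < 1) :
    ∫ y in R..R', y * (A * (Real.log R' - Real.log y) * (4 / (1 - y ^ 2) ^ 2))
      = (2 * A * Real.log R' - A * Real.log (1 - R' ^ 2))
        - (A * (Real.log R' - Real.log R) * (2 / (1 - R ^ 2))
            + 2 * A * Real.log R - A * Real.log (1 - R ^ 2)) := by
  have key := intervalIntegral.integral_eq_sub_of_hasDerivAt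
    (f := fun y : ℝ => A * ((Real.log R' - Real.log y) * (2 * (1 - y ^ 2)⁻¹))
        + 2 * A * Real.log y - A * Real.log (1 - y ^ 2))
    (f' := fun y : ℝ => y * (A * (Real.log R' - Real.log y) * (4 / (1 - y ^ 2) ^ 2)))
    (a := R) (b := R') ?_ ?_
  · rw [key]
    have hR : (1:ℝ) - R ^ 2 ≠ 0 := by nlinarith
    have hR' : (1:ℝ) - R' ^ 2 ≠ 0 := by nlinarith
    field_simp
    ring
  · intro x hx
    rw [uIcc_of_le h1.le] at hx
    have hx0 : 0 < x := lt_of_lt_of_le h0 hx.1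
    have hx1 : x < 1 := lt_of_le_of_lt hx.2 h2
    have hne : 1 - x ^ 2 ≠ 0 := by nlinarith
    have hsq : HasDerivAt (fun y : ℝ => 1 - y ^ 2) (-(2 * x)) x := by
      simpa using ((hasDerivAt_pow 2 x).const_sub 1)
    have t1 : HasDerivAt (fun y : ℝ => Real.log R' - Real.log y) (-(x⁻¹)) x :=
      (Real.hasDerivAt_log hx0.ne').const_sub _
    have t2 : HasDerivAt (fun y : ℝ => 2 * (1 - y ^ 2)⁻¹)
        (2 * (-(-(2 * x)) / (1 - x ^ 2) ^ 2)) x := (hsq.inv hne).const_mul 2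
    have t3 := (t1.mul t2).const_mul A
    have t4 := (Real.hasDerivAt_log hx0.ne').const_mul (2 * A)
    have t5 := (hsq.log hne).const_mul A
    have := (t3.add t4).sub t5
    have hxne : x ≠ 0 := hx0.ne'
    convert this using 1
    · rfl
    field_simp
    ring
  · apply ContinuousOn.intervalIntegrable
    rw [uIcc_of_le h1.le]
    have hlog : ContinuousOn Real.log (Icc R R') :=
      Real.continuousOn_log.mono (fun x hx => by
        simp only [mem_compl_iff, mem_singleton_iff]
        exact (lt_of_lt_of_le h0 hx.1).ne')
    apply ContinuousOn.mul continuousOn_id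
    apply ContinuousOn.mul
    · exact continuousOn_const.mul (continuousOn_const.sub hlog)
    · apply ContinuousOn.div continuousOn_const
      · fun_prop
      · intro x hx
        have hx1 : x < 1 := lt_of_le_of_lt hx.2 h2
        have hx0 : 0 < x := lt_of_lt_of_le h0 hx.1
        have : 1 - x ^ 2 ≠ 0 := by nlinarith
        positivity

lemma radial (R R' : ℝ) (h0 : 0 < R) (h1 : R < R') (h2 : R' < 1) :
    ∫ y in Ioi (0:ℝ), y * gRad R R' y
      = (1 / Real.log (R' / R)) * (Real.log (1 - R ^ 2) - Real.log (1 - R' ^ 2)) := by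
  set A := 1 / Real.log (R' / R) with hA
  have hR'0 : 0 < R' := h0.trans h1
  have hlogpos : 0 < Real.log (R' / R) := Real.log_pos (by rw [lt_div_iff₀ h0]; linarith)
  have hAlog : A * (Real.log R' - Real.log R) = 1 := by
    rw [hA, ← Real.log_div hR'0.ne' h0.ne']
    field_simp
  have step1 : ∫ y in Ioi (0:ℝ), y * gRad R R' y = ∫ y in Ioc (0:ℝ) R', y * gRad R R' y := by
    apply setIntegral_eq_of_subset_of_forall_diff_eq_zero measurableSet_Ioi
      (fun x hx => hx.1)
    intro x hx
    have hx1 : R' < x := by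
      rcases hx with ⟨hx0, hx2⟩
      by_contra h
      exact hx2 ⟨hx0, le_of_not_gt h⟩
    have : ¬ x ≤ R := by linarith
    have : ¬ x ≤ R' := by linarith
    simp [gRad, *]
  -- pointwise identifications on the two subintervals
  have eq1 : ∀ x ∈ Icc (0:ℝ) R, x * gRad R R' x = x * (4 / (1 - x ^ 2) ^ 2) := by
    intro x hx
    simp [gRad, hx.2]
  have eq2 : ∀ x ∈ Icc R R', x * gRad R R' x
      = x * (A * (Real.log R' - Real.log x) * (4 / (1 - x ^ 2) ^ 2)) := by
    intro x hx
    rcases eq_or_lt_of_le hx.1 with h | h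
    · subst h
      simp [gRad, hx.2, hAlog]
    · have hx0 : 0 < x := h0.trans h
      have : ¬ x ≤ R := not_le.mpr h
      simp only [gRad, this, if_false, hx.2, if_true]
      rw [Real.log_div hR'0.ne' hx0.ne']
  -- integrability of the regular versions
  have c1 : IntervalIntegrable (fun y : ℝ => y * (4 / (1 - y ^ 2) ^ 2)) volume 0 R := by
    apply ContinuousOn.intervalIntegrable
    apply ContinuousOn.mul continuousOn_id
    apply ContinuousOn.div continuousOn_const
    · fun_prop
    · intro x hx
      rw [uIcc_of_le h0.le] at hx
      have : 1 - x ^ 2 ≠ 0 := by nlinarith [hx.1, hx.2, h1, h2]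
      positivity
  have c2 : IntervalIntegrable
      (fun y : ℝ => y * (A * (Real.log R' - Real.log y) * (4 / (1 - y ^ 2) ^ 2))) volume R R' := by
    apply ContinuousOn.intervalIntegrable
    rw [uIcc_of_le h1.le]
    have hlog : ContinuousOn Real.log (Icc R R') :=
      Real.continuousOn_log.mono (fun x hx => by
        simp only [mem_compl_iff, mem_singleton_iff]
        exact (lt_of_lt_of_le h0 hx.1).ne')
    apply ContinuousOn.mul continuousOn_id
    apply ContinuousOn.mul
    · exact continuousOn_const.mul (continuousOn_const.sub hlog)
    · apply ContinuousOn.div continuousOn_const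
      · fun_prop
      · intro x hx
        have hx1 : x < 1 := lt_of_le_of_lt hx.2 h2
        have hx0 : 0 < x := lt_of_lt_of_le h0 hx.1
        have : 1 - x ^ 2 ≠ 0 := by nlinarith
        positivity
  have i1 : IntervalIntegrable (fun y : ℝ => y * gRad R R' y) volume 0 R := by
    apply c1.congr
    intro x hx
    rw [uIoc_of_le h0.le] at hx
    exact (eq1 x ⟨hx.1.le, hx.2⟩).symm
  have i2 : IntervalIntegrable (fun y : ℝ => y * gRad R R' y) volume R R' := by
    apply c2.congr
    intro x hx
    rw [uIoc_of_le h1.le] at hx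
    exact (eq2 x ⟨hx.1.le, hx.2⟩).symm
  rw [step1, ← intervalIntegral.integral_of_le hR'0.le,
    ← intervalIntegral.integral_add_adjacent_intervals i1 i2]
  have e1 : ∫ y in (0:ℝ)..R, y * gRad R R' y = ∫ y in (0:ℝ)..R, y * (4 / (1 - y ^ 2) ^ 2) :=
    intervalIntegral.integral_congr (by rw [uIcc_of_le h0.le]; exact eq1)
  have e2 : ∫ y in R..R', y * gRad R R' y
      = ∫ y in R..R', y * (A * (Real.log R' - Real.log y) * (4 / (1 - y ^ 2) ^ 2)) :=
    intervalIntegral.integral_congr (by rw [uIcc_of_le h1.le]; exact eq2)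
  rw [e1, e2, piece1 R h0 (h1.trans h2), piece2 R R' A h0 h1 h2]
  have h1R : (1:ℝ) - R ^ 2 ≠ 0 := by nlinarith
  have hrw : A * (Real.log R' - Real.log R) * (2 / (1 - R ^ 2)) = 2 / (1 - R ^ 2) := by
    rw [hAlog]; ring
  rw [hrw]
  linear_combination (2:ℝ) * hAlog

lemma polar (R R' : ℝ) :
    ∫ z : ℂ, gRad R R' ‖z‖ ∂volume
      = 2 * Real.pi * ∫ y in Ioi (0:ℝ), y * gRad R R' y := by
  rw [integral_fun_norm_addHaar volume (gRad R R')]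
  have h1 : volume.real (ball (0:ℂ) 1) = Real.pi := by
    simp [Measure.real, Complex.volume_ball]
  rw [h1]
  simp only [Complex.finrank_real_complex, smul_eq_mul, pow_one, nsmul_eq_mul, Nat.cast_ofNat]
  norm_num [mul_assoc]

lemma integral_phi (R R' : ℝ) (h0 : 0 < R) (h1 : R < R') (h2 : R' < 1) :
    (∫ z in Metric.ball (0 : ℂ) 1,
        phiRR R R' z * (4 / (1 - ‖z‖ ^ 2) ^ 2) ∂volume)
      = 2 * Real.pi * ((1 / Real.log (R' / R))
          * (Real.log (1 - R ^ 2) - Real.log (1 - R' ^ 2))) := by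
  have hfun : ∀ z : ℂ, phiRR R R' z * (4 / (1 - ‖z‖ ^ 2) ^ 2) = gRad R R' ‖z‖ := by
    intro z
    simp [phiRR, gRad]
  have step0 : (∫ z in Metric.ball (0 : ℂ) 1,
      phiRR R R' z * (4 / (1 - ‖z‖ ^ 2) ^ 2) ∂volume)
      = ∫ z : ℂ, gRad R R' ‖z‖ ∂volume := by
    simp_rw [hfun]
    apply setIntegral_eq_integral_of_forall_compl_eq_zero
    intro z hz
    have h1z : (1:ℝ) ≤ ‖z‖ := by
      simpa [Complex.dist_eq] using hz
    have hA : ¬ ‖z‖ ≤ R := by push_neg; linarith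
    have hB : ¬ ‖z‖ ≤ R' := by push_neg; linarith
    simp [gRad, hA, hB]
  rw [step0, polar, radial R R' h0 h1 h2]

theorem poincare_integral_phi_asymptotic :
    ∀ ε > (0 : ℝ), ∃ δ > (0 : ℝ), ∀ R R' : ℝ, 1 - δ < R → R < R' → R' < 1 → 0 < R →
      (1 / 2) * Real.log ((1 + R') / (1 - R')) -
        (1 / 2) * Real.log ((1 + R) / (1 - R)) ≥ 1 →
      |(∫ z in Metric.ball (0 : ℂ) 1,
            phiRR R R' z * (4 / (1 - ‖z‖ ^ 2) ^ 2) ∂volume) /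
          (4 * Real.pi * (1 / Real.log (R' / R)) *
            ((1 / 2) * Real.log ((1 + R') / (1 - R')) -
              (1 / 2) * Real.log ((1 + R) / (1 - R)))) - 1| < ε := by
  intro ε hε
  refine ⟨1 - Real.exp (-ε), by
    have := Real.exp_lt_one_iff.mpr (neg_neg_iff_pos.mpr hε)
    linarith, ?_⟩
  intro R R' hδR h1 h2 h0 hρ
  set ρ := (1 / 2) * Real.log ((1 + R') / (1 - R')) -
        (1 / 2) * Real.log ((1 + R) / (1 - R)) with hρdef
  have hR'0 : 0 < R' := h0.trans h1
  have hR1 : R < 1 := h1.trans h2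
  have hlogpos : 0 < Real.log (R' / R) := Real.log_pos (by rw [lt_div_iff₀ h0]; linarith)
  have hρpos : 0 < ρ := lt_of_lt_of_le one_pos hρ
  -- rewrite ρ in terms of individual logs
  have hρ' : ρ = (1/2) * (Real.log (1 + R') - Real.log (1 - R'))
      - (1/2) * (Real.log (1 + R) - Real.log (1 - R)) := by
    rw [hρdef, Real.log_div (by linarith) (by linarith), Real.log_div (by linarith) (by linarith)]
  -- expand the log difference in the integral
  have hL : Real.log (1 - R ^ 2) - Real.log (1 - R' ^ 2)
      = (Real.log (1 - R) + Real.log (1 + R)) - (Real.log (1 - R') + Real.log (1 + R')) := by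
    have e1 : (1:ℝ) - R ^ 2 = (1 - R) * (1 + R) := by ring
    have e2 : (1:ℝ) - R' ^ 2 = (1 - R') * (1 + R') := by ring
    rw [e1, e2, Real.log_mul (by linarith) (by linarith),
      Real.log_mul (by linarith) (by linarith)]
  -- the explicit value of the quotient
  have hval : (∫ z in Metric.ball (0 : ℂ) 1,
            phiRR R R' z * (4 / (1 - ‖z‖ ^ 2) ^ 2) ∂volume) /
          (4 * Real.pi * (1 / Real.log (R' / R)) * ρ) - 1
      = -((Real.log (1 + R') - Real.log (1 + R)) / ρ) := by
    have hAne : (4 * Real.pi * (1 / Real.log (R' / R))) ≠ 0 := by positivity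
    have hI : 2 * Real.pi * ((1 / Real.log (R' / R))
          * (Real.log (1 - R ^ 2) - Real.log (1 - R' ^ 2)))
        = 4 * Real.pi * (1 / Real.log (R' / R))
            * (ρ - (Real.log (1 + R') - Real.log (1 + R))) := by
      rw [hL, hρ']
      ring
    rw [integral_phi R R' h0 h1 h2, hI,
      mul_div_mul_left _ _ hAne, sub_div, div_self hρpos.ne']
    ring
  have hNnonneg : 0 ≤ Real.log (1 + R') - Real.log (1 + R) := by
    have := Real.log_le_log (by linarith : (0:ℝ) < 1 + R) (by linarith : (1:ℝ) + R ≤ 1 + R')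
    linarith
  rw [hval, abs_neg, abs_div, abs_of_pos hρpos, _root_.abs_of_nonneg hNnonneg]
  have hbound : (Real.log (1 + R') - Real.log (1 + R)) / ρ
      ≤ Real.log (1 + R') - Real.log (1 + R) := by
    apply div_le_self ?_ hρ
    have := Real.log_le_log (by linarith : (0:ℝ) < 1 + R) (by linarith : (1:ℝ) + R ≤ 1 + R')
    linarith
  have hfinal : Real.log (1 + R') - Real.log (1 + R) < ε := by
    have hlt1 : Real.log (1 + R') < Real.log 2 :=
      Real.log_lt_log (by linarith) (by linarith)
    have hlt2 : Real.log (1 + Real.exp (-ε)) < Real.log (1 + R) := by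
      apply Real.log_lt_log (by positivity)
      have : Real.exp (-ε) > 0 := Real.exp_pos _
      linarith
    have h2e : Real.log 2 - Real.log (1 + Real.exp (-ε)) < ε := by
      have hq : (2:ℝ) / (1 + Real.exp (-ε)) < Real.exp ε := by
        rw [div_lt_iff₀ (by positivity)]
        have he1 : Real.exp ε * Real.exp (-ε) = 1 := by rw [← Real.exp_add]; simp
        have he2 : (1:ℝ) < Real.exp ε := by
          have := Real.add_one_le_exp ε
          linarith
        nlinarith
      calc Real.log 2 - Real.log (1 + Real.exp (-ε))
          = Real.log (2 / (1 + Real.exp (-ε))) :=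
            (Real.log_div two_ne_zero (by positivity)).symm
        _ < Real.log (Real.exp ε) := Real.log_lt_log (by positivity) hq
        _ = ε := Real.log_exp ε
    linarith
  linarith
end
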